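/- arXiv:0809.4828 — 6 statements merged into one kernel-verified Lean document; each statement's English description precedes it below -/
import Mathlib

section
/- Let γ_0,γ_1,γ_2,γ_3 be the Weyl gamma matrices. For every family γ'_0,γ'_1,γ'_2,γ'_3 of complex 4×4 matrices satisfying the Clifford relations there exists an invertible complex 4×4 matrix L such that γ'_a = L γ_a L⁻¹ for all a ∈ {0,1,2,3}; moreover L is unique up to a non-zero complex factor, i.e. if K is invertible and also satisfies γ'_a = K γ_a K⁻¹ for all a, then K = c·L for some non-zero c ∈ ℂ. -/
open Matrix

noncomputable section

/-- The Minkowski metric components `diag(1,-1,-1,-1)`. -/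
def minkEta : Fin 4 → Fin 4 → ℝ := fun a b =>
  if a = b then (if a = 0 then 1 else -1) else 0

/-- A family of complex 4×4 matrices satisfies the Clifford relations if
`γ_a γ_b + γ_b γ_a = 2 η_{ab} I`. -/
def CliffordRels (γ : Fin 4 → Matrix (Fin 4) (Fin 4) ℂ) : Prop :=
  ∀ a b, γ a * γ b + γ b * γ a = (2 * (minkEta a b : ℂ)) • (1 : Matrix (Fin 4) (Fin 4) ℂ)

/-- The Weyl (chiral) gamma matrices. -/
def weylGamma : Fin 4 → Matrix (Fin 4) (Fin 4) ℂ :=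
  ![!![0, 0, 1, 0; 0, 0, 0, 1; 1, 0, 0, 0; 0, 1, 0, 0],
    !![0, 0, 0, -1; 0, 0, -1, 0; 0, 1, 0, 0; 1, 0, 0, 0],
    !![0, 0, 0, Complex.I; 0, 0, -Complex.I, 0; 0, -Complex.I, 0, 0; Complex.I, 0, 0, 0],
    !![0, 0, -1, 0; 0, 0, 0, 1; 1, 0, 0, 0; 0, -1, 0, 0]]

abbrev Mat4 := Matrix (Fin 4) (Fin 4) ℂ
abbrev B4 := Bool × Bool × Bool × Bool

def pcf (γ : Fin 4 → Mat4) (b : Bool) (i : Fin 4) : Mat4 := if b then γ i else 1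

def wrd (γ : Fin 4 → Mat4) (a : B4) : Mat4 :=
  pcf γ a.1 0 * (pcf γ a.2.1 1 * (pcf γ a.2.2.1 2 * pcf γ a.2.2.2 3))

def sgn (x : Bool) : ℤ := cond x (-1) 1

def etaI : Fin 4 → ℤ := ![1, -1, -1, -1]

def flipB (b : Fin 4) (a : B4) : B4 :=
  if b = 0 then (!a.1, a.2.1, a.2.2.1, a.2.2.2)
  else if b = 1 then (a.1, !a.2.1, a.2.2.1, a.2.2.2)
  else if b = 2 then (a.1, a.2.1, !a.2.2.1, a.2.2.2)
  else (a.1, a.2.1, a.2.2.1, !a.2.2.2)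

def sI (b : Fin 4) (a : B4) : ℤ :=
  if b = 0 then 1
  else if b = 1 then sgn a.1 * (if a.2.1 then -1 else 1)
  else if b = 2 then sgn a.1 * sgn a.2.1 * (if a.2.2.1 then -1 else 1)
  else sgn a.1 * sgn a.2.1 * sgn a.2.2.1 * (if a.2.2.2 then -1 else 1)

def sI' (b : Fin 4) (a : B4) : ℤ :=
  if b = 0 then sgn a.2.1 * sgn a.2.2.1 * sgn a.2.2.2
  else if b = 1 then sgn a.2.2.1 * sgn a.2.2.2 * (if a.2.1 then -1 else 1)
  else if b = 2 then sgn a.2.2.2 * (if a.2.2.1 then -1 else 1)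
  else (if a.2.2.2 then -1 else 1)

def uI : B4 → ℤ := fun a =>
  cond a.1
    (cond a.2.1 (cond a.2.2.1 (-1) (cond a.2.2.2 (-1) 1))
      (cond a.2.2.1 (cond a.2.2.2 (-1) 1) 1))
    (cond a.2.1 (cond a.2.2.1 (cond a.2.2.2 1 (-1)) (-1))
      (cond a.2.2.1 (-1) (cond a.2.2.2 (-1) 1)))

lemma idA : ∀ (b : Fin 4) (a : B4), uI a * (sI b a * sI' b a) = etaI b * uI (flipB b a) := by decide
lemma idB : ∀ a : B4, uI a * uI a = 1 := by decide
lemma idC : ∀ (b : Fin 4) (a : B4), flipB b (flipB b a) = a := by decide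

section generic
variable {γ : Fin 4 → Mat4}

lemma half_eq {c : ℂ} {X : Mat4} (h : X + X = c • 1) : X = (c / 2) • 1 := by
  have h2 : (2 : ℂ) • X = c • (1 : Mat4) := by rw [two_smul]; exact h
  calc X = (2 : ℂ)⁻¹ • ((2 : ℂ) • X) := by rw [smul_smul]; norm_num
    _ = (2 : ℂ)⁻¹ • (c • (1 : Mat4)) := by rw [h2]
    _ = (c / 2) • 1 := by rw [smul_smul]; ring_nf

lemma sq_eq (h : CliffordRels γ) (i : Fin 4) : γ i * γ i = ((etaI i : ℤ) : ℂ) • 1 := by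
  have h1 := half_eq (h i i)
  rw [h1]
  fin_cases i <;> norm_num [minkEta, etaI, Fin.ext_iff]

lemma anti (h : CliffordRels γ) {i j : Fin 4} (hij : i ≠ j) :
    γ j * γ i = -(γ i * γ j) := by
  have h1 := h i j
  rw [show minkEta i j = 0 by simp [minkEta, hij], Complex.ofReal_zero, mul_zero, zero_smul] at h1
  exact eq_neg_of_add_eq_zero_right h1

end generic

section brute
variable {γ : Fin 4 → Mat4}

lemma swap_assoc (h : CliffordRels γ) {i j : Fin 4} (hij : i ≠ j) (x : Mat4) :
    γ j * (γ i * x) = -(γ i * (γ j * x)) := by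
  rw [← mul_assoc, anti h hij, neg_mul, mul_assoc]

lemma sq_assoc (h : CliffordRels γ) (i : Fin 4) (x : Mat4) :
    γ i * (γ i * x) = ((etaI i : ℤ) : ℂ) • x := by
  rw [← mul_assoc, sq_eq h, smul_mul_assoc, one_mul]

set_option maxHeartbeats 6000000 in
lemma gamma_mul_wrd (h : CliffordRels γ) (b : Fin 4) (a : B4) :
    γ b * wrd γ a = ((sI b a : ℤ) : ℂ) • wrd γ (flipB b a) := by
  obtain ⟨a0, a1, a2, a3⟩ := a
  have w10 := swap_assoc h (show (0:Fin 4) ≠ 1 by decide)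
  have w20 := swap_assoc h (show (0:Fin 4) ≠ 2 by decide)
  have w30 := swap_assoc h (show (0:Fin 4) ≠ 3 by decide)
  have w21 := swap_assoc h (show (1:Fin 4) ≠ 2 by decide)
  have w31 := swap_assoc h (show (1:Fin 4) ≠ 3 by decide)
  have w32 := swap_assoc h (show (2:Fin 4) ≠ 3 by decide)
  have ww10 := anti h (show (0:Fin 4) ≠ 1 by decide)
  have ww20 := anti h (show (0:Fin 4) ≠ 2 by decide)
  have ww30 := anti h (show (0:Fin 4) ≠ 3 by decide)
  have ww21 := anti h (show (1:Fin 4) ≠ 2 by decide)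
  have ww31 := anti h (show (1:Fin 4) ≠ 3 by decide)
  have ww32 := anti h (show (2:Fin 4) ≠ 3 by decide)
  have q0 : ∀ x, γ 0 * (γ 0 * x) = x := by intro x; rw [sq_assoc h]; norm_num [etaI]
  have q1 : ∀ x, γ 1 * (γ 1 * x) = -x := by intro x; rw [sq_assoc h]; norm_num [etaI]
  have q2 : ∀ x, γ 2 * (γ 2 * x) = -x := by intro x; rw [sq_assoc h]; simp [etaI]
  have q3 : ∀ x, γ 3 * (γ 3 * x) = -x := by intro x; rw [sq_assoc h]; simp [etaI]
  have p0 : γ 0 * γ 0 = 1 := by rw [sq_eq h]; norm_num [etaI]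
  have p1 : γ 1 * γ 1 = -1 := by rw [sq_eq h]; norm_num [etaI]
  have p2 : γ 2 * γ 2 = -1 := by rw [sq_eq h]; simp [etaI]
  have p3 : γ 3 * γ 3 = -1 := by rw [sq_eq h]; simp [etaI]
  fin_cases b <;> cases a0 <;> cases a1 <;> cases a2 <;> cases a3 <;>
    simp only [wrd, pcf, flipB, sI, sgn, Fin.isValue, show (2:Fin 4) ≠ 0 by decide,
        show (2:Fin 4) ≠ 1 by decide, show (3:Fin 4) ≠ 0 by decide, show (3:Fin 4) ≠ 1 by decide,
        show (3:Fin 4) ≠ 2 by decide, show (1:Fin 4) ≠ 0 by decide,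
        if_true, if_false, ite_true, ite_false, if_neg, if_pos, Bool.cond_true, Bool.cond_false,
        Bool.not_true, Bool.not_false] <;>
    simp [mul_assoc, w10, w20, w30, w21, w31, w32, ww10, ww20, ww30, ww21, ww31, ww32,
        q0, q1, q2, q3, p0, p1, p2, p3, mul_one, one_mul, neg_mul, mul_neg, neg_neg,
        smul_smul, mul_smul_comm, smul_mul_assoc, neg_smul, smul_neg] <;>
    norm_num

set_option maxHeartbeats 6000000 in
lemma wrd_mul_gamma (h : CliffordRels γ) (b : Fin 4) (a : B4) :
    wrd γ a * γ b = ((sI' b a : ℤ) : ℂ) • wrd γ (flipB b a) := by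
  obtain ⟨a0, a1, a2, a3⟩ := a
  have w10 := swap_assoc h (show (0:Fin 4) ≠ 1 by decide)
  have w20 := swap_assoc h (show (0:Fin 4) ≠ 2 by decide)
  have w30 := swap_assoc h (show (0:Fin 4) ≠ 3 by decide)
  have w21 := swap_assoc h (show (1:Fin 4) ≠ 2 by decide)
  have w31 := swap_assoc h (show (1:Fin 4) ≠ 3 by decide)
  have w32 := swap_assoc h (show (2:Fin 4) ≠ 3 by decide)
  have ww10 := anti h (show (0:Fin 4) ≠ 1 by decide)
  have ww20 := anti h (show (0:Fin 4) ≠ 2 by decide)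
  have ww30 := anti h (show (0:Fin 4) ≠ 3 by decide)
  have ww21 := anti h (show (1:Fin 4) ≠ 2 by decide)
  have ww31 := anti h (show (1:Fin 4) ≠ 3 by decide)
  have ww32 := anti h (show (2:Fin 4) ≠ 3 by decide)
  have q0 : ∀ x, γ 0 * (γ 0 * x) = x := by intro x; rw [sq_assoc h]; norm_num [etaI]
  have q1 : ∀ x, γ 1 * (γ 1 * x) = -x := by intro x; rw [sq_assoc h]; norm_num [etaI]
  have q2 : ∀ x, γ 2 * (γ 2 * x) = -x := by intro x; rw [sq_assoc h]; simp [etaI]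
  have q3 : ∀ x, γ 3 * (γ 3 * x) = -x := by intro x; rw [sq_assoc h]; simp [etaI]
  have p0 : γ 0 * γ 0 = 1 := by rw [sq_eq h]; norm_num [etaI]
  have p1 : γ 1 * γ 1 = -1 := by rw [sq_eq h]; norm_num [etaI]
  have p2 : γ 2 * γ 2 = -1 := by rw [sq_eq h]; simp [etaI]
  have p3 : γ 3 * γ 3 = -1 := by rw [sq_eq h]; simp [etaI]
  fin_cases b <;> cases a0 <;> cases a1 <;> cases a2 <;> cases a3 <;>
    simp only [wrd, pcf, flipB, sI', sgn, Fin.isValue, show (2:Fin 4) ≠ 0 by decide,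
        show (2:Fin 4) ≠ 1 by decide, show (3:Fin 4) ≠ 0 by decide, show (3:Fin 4) ≠ 1 by decide,
        show (3:Fin 4) ≠ 2 by decide, show (1:Fin 4) ≠ 0 by decide,
        if_true, if_false, ite_true, ite_false, if_neg, if_pos, Bool.cond_true, Bool.cond_false,
        Bool.not_true, Bool.not_false] <;>
    simp [mul_assoc, w10, w20, w30, w21, w31, w32, ww10, ww20, ww30, ww21, ww31, ww32,
        q0, q1, q2, q3, p0, p1, p2, p3, mul_one, one_mul, neg_mul, mul_neg, neg_neg,
        smul_smul, mul_smul_comm, smul_mul_assoc, neg_smul, smul_neg] <;>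
    try norm_num

set_option maxHeartbeats 6000000 in
lemma wrd_mul_self (h : CliffordRels γ) (a : B4) :
    wrd γ a * wrd γ a = ((uI a : ℤ) : ℂ) • 1 := by
  obtain ⟨a0, a1, a2, a3⟩ := a
  have w10 := swap_assoc h (show (0:Fin 4) ≠ 1 by decide)
  have w20 := swap_assoc h (show (0:Fin 4) ≠ 2 by decide)
  have w30 := swap_assoc h (show (0:Fin 4) ≠ 3 by decide)
  have w21 := swap_assoc h (show (1:Fin 4) ≠ 2 by decide)
  have w31 := swap_assoc h (show (1:Fin 4) ≠ 3 by decide)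
  have w32 := swap_assoc h (show (2:Fin 4) ≠ 3 by decide)
  have ww10 := anti h (show (0:Fin 4) ≠ 1 by decide)
  have ww20 := anti h (show (0:Fin 4) ≠ 2 by decide)
  have ww30 := anti h (show (0:Fin 4) ≠ 3 by decide)
  have ww21 := anti h (show (1:Fin 4) ≠ 2 by decide)
  have ww31 := anti h (show (1:Fin 4) ≠ 3 by decide)
  have ww32 := anti h (show (2:Fin 4) ≠ 3 by decide)
  have q0 : ∀ x, γ 0 * (γ 0 * x) = x := by intro x; rw [sq_assoc h]; norm_num [etaI]
  have q1 : ∀ x, γ 1 * (γ 1 * x) = -x := by intro x; rw [sq_assoc h]; norm_num [etaI]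
  have q2 : ∀ x, γ 2 * (γ 2 * x) = -x := by intro x; rw [sq_assoc h]; simp [etaI]
  have q3 : ∀ x, γ 3 * (γ 3 * x) = -x := by intro x; rw [sq_assoc h]; simp [etaI]
  have p0 : γ 0 * γ 0 = 1 := by rw [sq_eq h]; norm_num [etaI]
  have p1 : γ 1 * γ 1 = -1 := by rw [sq_eq h]; norm_num [etaI]
  have p2 : γ 2 * γ 2 = -1 := by rw [sq_eq h]; simp [etaI]
  have p3 : γ 3 * γ 3 = -1 := by rw [sq_eq h]; simp [etaI]
  cases a0 <;> cases a1 <;> cases a2 <;> cases a3 <;>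
    simp only [wrd, pcf, uI, sgn, Fin.isValue,
        if_true, if_false, ite_true, ite_false, Bool.cond_true, Bool.cond_false,
        Bool.not_true, Bool.not_false] <;>
    simp [mul_assoc, w10, w20, w30, w21, w31, w32, ww10, ww20, ww30, ww21, ww31, ww32,
        q0, q1, q2, q3, p0, p1, p2, p3, mul_one, one_mul, neg_mul, mul_neg, neg_neg,
        smul_smul, mul_smul_comm, smul_mul_assoc, neg_smul, smul_neg] <;>
    try norm_num

end brute

def flipPerm (b : Fin 4) : Equiv.Perm B4 :=
  Function.Involutive.toPerm (flipB b) (fun a => idC b a)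

@[simp] lemma flipPerm_apply (b : Fin 4) (a : B4) : flipPerm b a = flipB b a := rfl

def pauliS (γ δ : Fin 4 → Mat4) (F : Mat4) : Mat4 :=
  ∑ a : B4, ((uI a : ℤ) : ℂ) • (wrd γ a * F * wrd δ a)

lemma etaI_ne_zero : ∀ b : Fin 4, ((etaI b : ℤ) : ℂ) ≠ 0 := by
  intro b
  have : etaI b ≠ 0 := by fin_cases b <;> decide
  exact_mod_cast Int.cast_ne_zero.mpr this

lemma gamma_pauliS {γ δ : Fin 4 → Mat4} (hγ : CliffordRels γ) (hδ : CliffordRels δ)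
    (b : Fin 4) (F : Mat4) :
    γ b * pauliS γ δ F = pauliS γ δ F * δ b := by
  have hmain : γ b * pauliS γ δ F * δ b = ((etaI b : ℤ) : ℂ) • pauliS γ δ F := by
    unfold pauliS
    rw [Finset.mul_sum, Finset.sum_mul, Finset.smul_sum]
    rw [← Equiv.sum_comp (flipPerm b)
      (fun a => ((etaI b : ℤ) : ℂ) • (((uI a : ℤ) : ℂ) • (wrd γ a * F * wrd δ a)))]
    refine Finset.sum_congr rfl fun a _ => ?_
    have e1 : γ b * (((uI a : ℤ) : ℂ) • (wrd γ a * F * wrd δ a)) * δ b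
        = ((uI a : ℤ) : ℂ) • ((γ b * wrd γ a) * F * (wrd δ a * δ b)) := by
      simp only [mul_smul_comm, smul_mul_assoc, mul_assoc]
    rw [e1, gamma_mul_wrd hγ, wrd_mul_gamma hδ]
    simp only [flipPerm_apply, smul_mul_assoc, mul_smul_comm, smul_smul]
    congr 1
    have hz : uI a * (sI' b a * sI b a) = etaI b * uI (flipB b a) := by
      rw [← idA b a]; ring
    exact_mod_cast congrArg (fun z : ℤ => (z : ℂ)) hz
  have hsq : δ b * δ b = ((etaI b : ℤ) : ℂ) • 1 := sq_eq hδ b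
  have h2 : γ b * pauliS γ δ F * δ b * δ b = ((etaI b : ℤ) : ℂ) • (pauliS γ δ F * δ b) := by
    rw [hmain, smul_mul_assoc]
  have h3 : γ b * pauliS γ δ F * δ b * δ b = ((etaI b : ℤ) : ℂ) • (γ b * pauliS γ δ F) := by
    rw [mul_assoc, hsq]
    simp [mul_smul_comm]
  exact smul_right_injective Mat4 (etaI_ne_zero b) (h3.symm.trans h2)

lemma mul_fin_four {α} [NonUnitalNonAssocSemiring α]
    (a11 a12 a13 a14 a21 a22 a23 a24 a31 a32 a33 a34 a41 a42 a43 a44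
     b11 b12 b13 b14 b21 b22 b23 b24 b31 b32 b33 b34 b41 b42 b43 b44 : α) :
    !![a11,a12,a13,a14; a21,a22,a23,a24; a31,a32,a33,a34; a41,a42,a43,a44] *
    !![b11,b12,b13,b14; b21,b22,b23,b24; b31,b32,b33,b34; b41,b42,b43,b44] =
    !![a11*b11+a12*b21+a13*b31+a14*b41, a11*b12+a12*b22+a13*b32+a14*b42,
       a11*b13+a12*b23+a13*b33+a14*b43, a11*b14+a12*b24+a13*b34+a14*b44;
       a21*b11+a22*b21+a23*b31+a24*b41, a21*b12+a22*b22+a23*b32+a24*b42,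
       a21*b13+a22*b23+a23*b33+a24*b43, a21*b14+a22*b24+a23*b34+a24*b44;
       a31*b11+a32*b21+a33*b31+a34*b41, a31*b12+a32*b22+a33*b32+a34*b42,
       a31*b13+a32*b23+a33*b33+a34*b43, a31*b14+a32*b24+a33*b34+a34*b44;
       a41*b11+a42*b21+a43*b31+a44*b41, a41*b12+a42*b22+a43*b32+a44*b42,
       a41*b13+a42*b23+a43*b33+a44*b43, a41*b14+a42*b24+a43*b34+a44*b44] := by
  ext i j
  fin_cases i <;> fin_cases j <;>
    simp [Matrix.mul_apply, Fin.sum_univ_four]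

section weylfacts
lemma gW0 : weylGamma 0 = !![0, 0, 1, 0; 0, 0, 0, 1; 1, 0, 0, 0; 0, 1, 0, 0] := by norm_num [weylGamma]
lemma gW1 : weylGamma 1 = !![0, 0, 0, (-1); 0, 0, (-1), 0; 0, 1, 0, 0; 1, 0, 0, 0] := by norm_num [weylGamma]
lemma gW2 : weylGamma 2 = !![0, 0, 0, Complex.I; 0, 0, (-Complex.I), 0; 0, (-Complex.I), 0, 0; Complex.I, 0, 0, 0] := by rfl
lemma gW3 : weylGamma 3 = !![0, 0, (-1), 0; 0, 0, 0, 1; 1, 0, 0, 0; 0, (-1), 0, 0] := by rfl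
lemma gW0' : weylGamma ⟨0, by omega⟩ = !![0, 0, 1, 0; 0, 0, 0, 1; 1, 0, 0, 0; 0, 1, 0, 0] := gW0
lemma gW1' : weylGamma ⟨1, by omega⟩ = !![0, 0, 0, (-1); 0, 0, (-1), 0; 0, 1, 0, 0; 1, 0, 0, 0] := gW1
lemma gW2' : weylGamma ⟨2, by omega⟩ = !![0, 0, 0, Complex.I; 0, 0, (-Complex.I), 0; 0, (-Complex.I), 0, 0; Complex.I, 0, 0, 0] := gW2
lemma gW3' : weylGamma ⟨3, by omega⟩ = !![0, 0, (-1), 0; 0, 0, 0, 1; 1, 0, 0, 0; 0, (-1), 0, 0] := gW3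
lemma one4 : (1 : Mat4) = !![1,0,0,0; 0,1,0,0; 0,0,1,0; 0,0,0,1] := by
  ext i j; fin_cases i <;> fin_cases j <;> rfl

lemma zero4 : (0 : Mat4) = !![0,0,0,0; 0,0,0,0; 0,0,0,0; 0,0,0,0] := by
  ext i j; fin_cases i <;> fin_cases j <;> rfl
lemma wrdW_ffff : wrd weylGamma (false, false, false, false) = !![1, 0, 0, 0; 0, 1, 0, 0; 0, 0, 1, 0; 0, 0, 0, 1] := by
  rw [show wrd weylGamma (false, false, false, false) = 1 by simp [wrd, pcf]]
  exact one4
lemma wrdW_ffft : wrd weylGamma (false, false, false, true) = !![0, 0, (-1), 0; 0, 0, 0, 1; 1, 0, 0, 0; 0, (-1), 0, 0] := by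
  simp only [wrd, pcf, one_mul, mul_one, if_true, if_false, gW0, gW1, gW2, gW3, one4]
  norm_num [mul_fin_four]
lemma wrdW_fftf : wrd weylGamma (false, false, true, false) = !![0, 0, 0, Complex.I; 0, 0, (-Complex.I), 0; 0, (-Complex.I), 0, 0; Complex.I, 0, 0, 0] := by
  simp only [wrd, pcf, one_mul, mul_one, if_true, if_false, gW0, gW1, gW2, gW3, one4]
  norm_num [mul_fin_four]
lemma wrdW_fftt : wrd weylGamma (false, false, true, true) = !![0, (-Complex.I), 0, 0; (-Complex.I), 0, 0, 0; 0, 0, 0, (-Complex.I); 0, 0, (-Complex.I), 0] := by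
  simp only [wrd, pcf, one_mul, mul_one, if_true, if_false, gW0, gW1, gW2, gW3, one4]
  norm_num [mul_fin_four]
lemma wrdW_ftff : wrd weylGamma (false, true, false, false) = !![0, 0, 0, (-1); 0, 0, (-1), 0; 0, 1, 0, 0; 1, 0, 0, 0] := by
  simp only [wrd, pcf, one_mul, mul_one, if_true, if_false, gW0, gW1, gW2, gW3, one4]
  norm_num [mul_fin_four]
lemma wrdW_ftft : wrd weylGamma (false, true, false, true) = !![0, 1, 0, 0; (-1), 0, 0, 0; 0, 0, 0, 1; 0, 0, (-1), 0] := by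
  simp only [wrd, pcf, one_mul, mul_one, if_true, if_false, gW0, gW1, gW2, gW3, one4]
  norm_num [mul_fin_four]
lemma wrdW_fttf : wrd weylGamma (false, true, true, false) = !![(-Complex.I), 0, 0, 0; 0, Complex.I, 0, 0; 0, 0, (-Complex.I), 0; 0, 0, 0, Complex.I] := by
  simp only [wrd, pcf, one_mul, mul_one, if_true, if_false, gW0, gW1, gW2, gW3, one4]
  norm_num [mul_fin_four]
lemma wrdW_fttt : wrd weylGamma (false, true, true, true) = !![0, 0, Complex.I, 0; 0, 0, 0, Complex.I; (-Complex.I), 0, 0, 0; 0, (-Complex.I), 0, 0] := by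
  simp only [wrd, pcf, one_mul, mul_one, if_true, if_false, gW0, gW1, gW2, gW3, one4]
  norm_num [mul_fin_four]
lemma wrdW_tfff : wrd weylGamma (true, false, false, false) = !![0, 0, 1, 0; 0, 0, 0, 1; 1, 0, 0, 0; 0, 1, 0, 0] := by
  simp only [wrd, pcf, one_mul, mul_one, if_true, if_false, gW0, gW1, gW2, gW3, one4]
  norm_num [mul_fin_four]
lemma wrdW_tfft : wrd weylGamma (true, false, false, true) = !![1, 0, 0, 0; 0, (-1), 0, 0; 0, 0, (-1), 0; 0, 0, 0, 1] := by
  simp only [wrd, pcf, one_mul, mul_one, if_true, if_false, gW0, gW1, gW2, gW3, one4]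
  norm_num [mul_fin_four]
lemma wrdW_tftf : wrd weylGamma (true, false, true, false) = !![0, (-Complex.I), 0, 0; Complex.I, 0, 0, 0; 0, 0, 0, Complex.I; 0, 0, (-Complex.I), 0] := by
  simp only [wrd, pcf, one_mul, mul_one, if_true, if_false, gW0, gW1, gW2, gW3, one4]
  norm_num [mul_fin_four]
lemma wrdW_tftt : wrd weylGamma (true, false, true, true) = !![0, 0, 0, (-Complex.I); 0, 0, (-Complex.I), 0; 0, (-Complex.I), 0, 0; (-Complex.I), 0, 0, 0] := by
  simp only [wrd, pcf, one_mul, mul_one, if_true, if_false, gW0, gW1, gW2, gW3, one4]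
  norm_num [mul_fin_four]
lemma wrdW_ttff : wrd weylGamma (true, true, false, false) = !![0, 1, 0, 0; 1, 0, 0, 0; 0, 0, 0, (-1); 0, 0, (-1), 0] := by
  simp only [wrd, pcf, one_mul, mul_one, if_true, if_false, gW0, gW1, gW2, gW3, one4]
  norm_num [mul_fin_four]
lemma wrdW_ttft : wrd weylGamma (true, true, false, true) = !![0, 0, 0, 1; 0, 0, (-1), 0; 0, 1, 0, 0; (-1), 0, 0, 0] := by
  simp only [wrd, pcf, one_mul, mul_one, if_true, if_false, gW0, gW1, gW2, gW3, one4]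
  norm_num [mul_fin_four]
lemma wrdW_tttf : wrd weylGamma (true, true, true, false) = !![0, 0, (-Complex.I), 0; 0, 0, 0, Complex.I; (-Complex.I), 0, 0, 0; 0, Complex.I, 0, 0] := by
  simp only [wrd, pcf, one_mul, mul_one, if_true, if_false, gW0, gW1, gW2, gW3, one4]
  norm_num [mul_fin_four]
lemma wrdW_tttt : wrd weylGamma (true, true, true, true) = !![(-Complex.I), 0, 0, 0; 0, (-Complex.I), 0, 0; 0, 0, Complex.I, 0; 0, 0, 0, Complex.I] := by
  simp only [wrd, pcf, one_mul, mul_one, if_true, if_false, gW0, gW1, gW2, gW3, one4]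
  norm_num [mul_fin_four]
set_option maxHeartbeats 4000000 in
lemma weylCliff : CliffordRels weylGamma := by
  intro a b
  fin_cases a <;> fin_cases b <;>
    simp only [gW0', gW1', gW2', gW3', gW0, gW1, gW2, gW3, one4, zero4] <;>
    norm_num [minkEta, mul_fin_four, Matrix.smul_cons, Matrix.smul_empty, Fin.mk.injEq, Fin.ext_iff, zero4] <;>
    exact zero4.symm

end weylfacts

lemma Elit00 : (Matrix.single 0 0 (1:ℂ) : Mat4) = !![1, 0, 0, 0; 0, 0, 0, 0; 0, 0, 0, 0; 0, 0, 0, 0] := by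
  ext i j; fin_cases i <;> fin_cases j <;> rfl
lemma Elit01 : (Matrix.single 0 1 (1:ℂ) : Mat4) = !![0, 1, 0, 0; 0, 0, 0, 0; 0, 0, 0, 0; 0, 0, 0, 0] := by
  ext i j; fin_cases i <;> fin_cases j <;> rfl
lemma Elit02 : (Matrix.single 0 2 (1:ℂ) : Mat4) = !![0, 0, 1, 0; 0, 0, 0, 0; 0, 0, 0, 0; 0, 0, 0, 0] := by
  ext i j; fin_cases i <;> fin_cases j <;> rfl
lemma Elit03 : (Matrix.single 0 3 (1:ℂ) : Mat4) = !![0, 0, 0, 1; 0, 0, 0, 0; 0, 0, 0, 0; 0, 0, 0, 0] := by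
  ext i j; fin_cases i <;> fin_cases j <;> rfl
lemma Elit10 : (Matrix.single 1 0 (1:ℂ) : Mat4) = !![0, 0, 0, 0; 1, 0, 0, 0; 0, 0, 0, 0; 0, 0, 0, 0] := by
  ext i j; fin_cases i <;> fin_cases j <;> rfl
lemma Elit11 : (Matrix.single 1 1 (1:ℂ) : Mat4) = !![0, 0, 0, 0; 0, 1, 0, 0; 0, 0, 0, 0; 0, 0, 0, 0] := by
  ext i j; fin_cases i <;> fin_cases j <;> rfl
lemma Elit12 : (Matrix.single 1 2 (1:ℂ) : Mat4) = !![0, 0, 0, 0; 0, 0, 1, 0; 0, 0, 0, 0; 0, 0, 0, 0] := by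
  ext i j; fin_cases i <;> fin_cases j <;> rfl
lemma Elit13 : (Matrix.single 1 3 (1:ℂ) : Mat4) = !![0, 0, 0, 0; 0, 0, 0, 1; 0, 0, 0, 0; 0, 0, 0, 0] := by
  ext i j; fin_cases i <;> fin_cases j <;> rfl
lemma Elit20 : (Matrix.single 2 0 (1:ℂ) : Mat4) = !![0, 0, 0, 0; 0, 0, 0, 0; 1, 0, 0, 0; 0, 0, 0, 0] := by
  ext i j; fin_cases i <;> fin_cases j <;> rfl
lemma Elit21 : (Matrix.single 2 1 (1:ℂ) : Mat4) = !![0, 0, 0, 0; 0, 0, 0, 0; 0, 1, 0, 0; 0, 0, 0, 0] := by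
  ext i j; fin_cases i <;> fin_cases j <;> rfl
lemma Elit22 : (Matrix.single 2 2 (1:ℂ) : Mat4) = !![0, 0, 0, 0; 0, 0, 0, 0; 0, 0, 1, 0; 0, 0, 0, 0] := by
  ext i j; fin_cases i <;> fin_cases j <;> rfl
lemma Elit23 : (Matrix.single 2 3 (1:ℂ) : Mat4) = !![0, 0, 0, 0; 0, 0, 0, 0; 0, 0, 0, 1; 0, 0, 0, 0] := by
  ext i j; fin_cases i <;> fin_cases j <;> rfl
lemma Elit30 : (Matrix.single 3 0 (1:ℂ) : Mat4) = !![0, 0, 0, 0; 0, 0, 0, 0; 0, 0, 0, 0; 1, 0, 0, 0] := by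
  ext i j; fin_cases i <;> fin_cases j <;> rfl
lemma Elit31 : (Matrix.single 3 1 (1:ℂ) : Mat4) = !![0, 0, 0, 0; 0, 0, 0, 0; 0, 0, 0, 0; 0, 1, 0, 0] := by
  ext i j; fin_cases i <;> fin_cases j <;> rfl
lemma Elit32 : (Matrix.single 3 2 (1:ℂ) : Mat4) = !![0, 0, 0, 0; 0, 0, 0, 0; 0, 0, 0, 0; 0, 0, 1, 0] := by
  ext i j; fin_cases i <;> fin_cases j <;> rfl
lemma Elit33 : (Matrix.single 3 3 (1:ℂ) : Mat4) = !![0, 0, 0, 0; 0, 0, 0, 0; 0, 0, 0, 0; 0, 0, 0, 1] := by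
  ext i j; fin_cases i <;> fin_cases j <;> rfl
lemma spanE_00 : (Matrix.single 0 0 (1:ℂ) : Mat4) = (1/4 : ℂ) • wrd weylGamma (false, false, false, false) + (Complex.I/4) • wrd weylGamma (false, true, true, false) + (1/4 : ℂ) • wrd weylGamma (true, false, false, true) + (Complex.I/4) • wrd weylGamma (true, true, true, true) := by
  rw [Elit00, wrdW_ffff, wrdW_fttf, wrdW_tfft, wrdW_tttt]
  norm_num [Matrix.smul_cons, Matrix.smul_empty, div_mul_eq_mul_div, neg_mul, neg_div, neg_neg, Complex.I_mul_I]
lemma spanE_01 : (Matrix.single 0 1 (1:ℂ) : Mat4) = (Complex.I/4) • wrd weylGamma (false, false, true, true) + (1/4 : ℂ) • wrd weylGamma (false, true, false, true) + (Complex.I/4) • wrd weylGamma (true, false, true, false) + (1/4 : ℂ) • wrd weylGamma (true, true, false, false) := by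
  rw [Elit01, wrdW_fftt, wrdW_ftft, wrdW_tftf, wrdW_ttff]
  norm_num [Matrix.smul_cons, Matrix.smul_empty, div_mul_eq_mul_div, neg_mul, neg_div, neg_neg, Complex.I_mul_I]
lemma spanE_02 : (Matrix.single 0 2 (1:ℂ) : Mat4) = (-1/4 : ℂ) • wrd weylGamma (false, false, false, true) + (-Complex.I/4) • wrd weylGamma (false, true, true, true) + (1/4 : ℂ) • wrd weylGamma (true, false, false, false) + (Complex.I/4) • wrd weylGamma (true, true, true, false) := by
  rw [Elit02, wrdW_ffft, wrdW_fttt, wrdW_tfff, wrdW_tttf]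
  norm_num [Matrix.smul_cons, Matrix.smul_empty, div_mul_eq_mul_div, neg_mul, neg_div, neg_neg, Complex.I_mul_I]
lemma spanE_03 : (Matrix.single 0 3 (1:ℂ) : Mat4) = (-Complex.I/4) • wrd weylGamma (false, false, true, false) + (-1/4 : ℂ) • wrd weylGamma (false, true, false, false) + (Complex.I/4) • wrd weylGamma (true, false, true, true) + (1/4 : ℂ) • wrd weylGamma (true, true, false, true) := by
  rw [Elit03, wrdW_fftf, wrdW_ftff, wrdW_tftt, wrdW_ttft]
  norm_num [Matrix.smul_cons, Matrix.smul_empty, div_mul_eq_mul_div, neg_mul, neg_div, neg_neg, Complex.I_mul_I]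
lemma spanE_10 : (Matrix.single 1 0 (1:ℂ) : Mat4) = (Complex.I/4) • wrd weylGamma (false, false, true, true) + (-1/4 : ℂ) • wrd weylGamma (false, true, false, true) + (-Complex.I/4) • wrd weylGamma (true, false, true, false) + (1/4 : ℂ) • wrd weylGamma (true, true, false, false) := by
  rw [Elit10, wrdW_fftt, wrdW_ftft, wrdW_tftf, wrdW_ttff]
  norm_num [Matrix.smul_cons, Matrix.smul_empty, div_mul_eq_mul_div, neg_mul, neg_div, neg_neg, Complex.I_mul_I]
lemma spanE_11 : (Matrix.single 1 1 (1:ℂ) : Mat4) = (1/4 : ℂ) • wrd weylGamma (false, false, false, false) + (-Complex.I/4) • wrd weylGamma (false, true, true, false) + (-1/4 : ℂ) • wrd weylGamma (true, false, false, true) + (Complex.I/4) • wrd weylGamma (true, true, true, true) := by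
  rw [Elit11, wrdW_ffff, wrdW_fttf, wrdW_tfft, wrdW_tttt]
  norm_num [Matrix.smul_cons, Matrix.smul_empty, div_mul_eq_mul_div, neg_mul, neg_div, neg_neg, Complex.I_mul_I]
lemma spanE_12 : (Matrix.single 1 2 (1:ℂ) : Mat4) = (Complex.I/4) • wrd weylGamma (false, false, true, false) + (-1/4 : ℂ) • wrd weylGamma (false, true, false, false) + (Complex.I/4) • wrd weylGamma (true, false, true, true) + (-1/4 : ℂ) • wrd weylGamma (true, true, false, true) := by
  rw [Elit12, wrdW_fftf, wrdW_ftff, wrdW_tftt, wrdW_ttft]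
  norm_num [Matrix.smul_cons, Matrix.smul_empty, div_mul_eq_mul_div, neg_mul, neg_div, neg_neg, Complex.I_mul_I]
lemma spanE_13 : (Matrix.single 1 3 (1:ℂ) : Mat4) = (1/4 : ℂ) • wrd weylGamma (false, false, false, true) + (-Complex.I/4) • wrd weylGamma (false, true, true, true) + (1/4 : ℂ) • wrd weylGamma (true, false, false, false) + (-Complex.I/4) • wrd weylGamma (true, true, true, false) := by
  rw [Elit13, wrdW_ffft, wrdW_fttt, wrdW_tfff, wrdW_tttf]
  norm_num [Matrix.smul_cons, Matrix.smul_empty, div_mul_eq_mul_div, neg_mul, neg_div, neg_neg, Complex.I_mul_I]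
lemma spanE_20 : (Matrix.single 2 0 (1:ℂ) : Mat4) = (1/4 : ℂ) • wrd weylGamma (false, false, false, true) + (Complex.I/4) • wrd weylGamma (false, true, true, true) + (1/4 : ℂ) • wrd weylGamma (true, false, false, false) + (Complex.I/4) • wrd weylGamma (true, true, true, false) := by
  rw [Elit20, wrdW_ffft, wrdW_fttt, wrdW_tfff, wrdW_tttf]
  norm_num [Matrix.smul_cons, Matrix.smul_empty, div_mul_eq_mul_div, neg_mul, neg_div, neg_neg, Complex.I_mul_I]
lemma spanE_21 : (Matrix.single 2 1 (1:ℂ) : Mat4) = (Complex.I/4) • wrd weylGamma (false, false, true, false) + (1/4 : ℂ) • wrd weylGamma (false, true, false, false) + (Complex.I/4) • wrd weylGamma (true, false, true, true) + (1/4 : ℂ) • wrd weylGamma (true, true, false, true) := by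
  rw [Elit21, wrdW_fftf, wrdW_ftff, wrdW_tftt, wrdW_ttft]
  norm_num [Matrix.smul_cons, Matrix.smul_empty, div_mul_eq_mul_div, neg_mul, neg_div, neg_neg, Complex.I_mul_I]
lemma spanE_22 : (Matrix.single 2 2 (1:ℂ) : Mat4) = (1/4 : ℂ) • wrd weylGamma (false, false, false, false) + (Complex.I/4) • wrd weylGamma (false, true, true, false) + (-1/4 : ℂ) • wrd weylGamma (true, false, false, true) + (-Complex.I/4) • wrd weylGamma (true, true, true, true) := by
  rw [Elit22, wrdW_ffff, wrdW_fttf, wrdW_tfft, wrdW_tttt]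
  norm_num [Matrix.smul_cons, Matrix.smul_empty, div_mul_eq_mul_div, neg_mul, neg_div, neg_neg, Complex.I_mul_I]
lemma spanE_23 : (Matrix.single 2 3 (1:ℂ) : Mat4) = (Complex.I/4) • wrd weylGamma (false, false, true, true) + (1/4 : ℂ) • wrd weylGamma (false, true, false, true) + (-Complex.I/4) • wrd weylGamma (true, false, true, false) + (-1/4 : ℂ) • wrd weylGamma (true, true, false, false) := by
  rw [Elit23, wrdW_fftt, wrdW_ftft, wrdW_tftf, wrdW_ttff]
  norm_num [Matrix.smul_cons, Matrix.smul_empty, div_mul_eq_mul_div, neg_mul, neg_div, neg_neg, Complex.I_mul_I]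
lemma spanE_30 : (Matrix.single 3 0 (1:ℂ) : Mat4) = (-Complex.I/4) • wrd weylGamma (false, false, true, false) + (1/4 : ℂ) • wrd weylGamma (false, true, false, false) + (Complex.I/4) • wrd weylGamma (true, false, true, true) + (-1/4 : ℂ) • wrd weylGamma (true, true, false, true) := by
  rw [Elit30, wrdW_fftf, wrdW_ftff, wrdW_tftt, wrdW_ttft]
  norm_num [Matrix.smul_cons, Matrix.smul_empty, div_mul_eq_mul_div, neg_mul, neg_div, neg_neg, Complex.I_mul_I]
lemma spanE_31 : (Matrix.single 3 1 (1:ℂ) : Mat4) = (-1/4 : ℂ) • wrd weylGamma (false, false, false, true) + (Complex.I/4) • wrd weylGamma (false, true, true, true) + (1/4 : ℂ) • wrd weylGamma (true, false, false, false) + (-Complex.I/4) • wrd weylGamma (true, true, true, false) := by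
  rw [Elit31, wrdW_ffft, wrdW_fttt, wrdW_tfff, wrdW_tttf]
  norm_num [Matrix.smul_cons, Matrix.smul_empty, div_mul_eq_mul_div, neg_mul, neg_div, neg_neg, Complex.I_mul_I]
lemma spanE_32 : (Matrix.single 3 2 (1:ℂ) : Mat4) = (Complex.I/4) • wrd weylGamma (false, false, true, true) + (-1/4 : ℂ) • wrd weylGamma (false, true, false, true) + (Complex.I/4) • wrd weylGamma (true, false, true, false) + (-1/4 : ℂ) • wrd weylGamma (true, true, false, false) := by
  rw [Elit32, wrdW_fftt, wrdW_ftft, wrdW_tftf, wrdW_ttff]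
  norm_num [Matrix.smul_cons, Matrix.smul_empty, div_mul_eq_mul_div, neg_mul, neg_div, neg_neg, Complex.I_mul_I]
lemma spanE_33 : (Matrix.single 3 3 (1:ℂ) : Mat4) = (1/4 : ℂ) • wrd weylGamma (false, false, false, false) + (-Complex.I/4) • wrd weylGamma (false, true, true, false) + (1/4 : ℂ) • wrd weylGamma (true, false, false, true) + (-Complex.I/4) • wrd weylGamma (true, true, true, true) := by
  rw [Elit33, wrdW_ffff, wrdW_fttf, wrdW_tfft, wrdW_tttt]
  norm_num [Matrix.smul_cons, Matrix.smul_empty, div_mul_eq_mul_div, neg_mul, neg_div, neg_neg, Complex.I_mul_I]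

section glue

lemma mem4 (c1 c2 c3 c4 : ℂ) (a1 a2 a3 a4 : B4) :
    c1 • wrd weylGamma a1 + c2 • wrd weylGamma a2 + c3 • wrd weylGamma a3 + c4 • wrd weylGamma a4
      ∈ Submodule.span ℂ (Set.range (fun a : B4 => wrd weylGamma a)) := by
  refine add_mem (add_mem (add_mem ?_ ?_) ?_) ?_ <;>
    exact Submodule.smul_mem _ _ (Submodule.subset_span ⟨_, rfl⟩)

lemma std_mem : ∀ p q : Fin 4, (Matrix.single p q (1:ℂ) : Mat4) ∈
    Submodule.span ℂ (Set.range (fun a : B4 => wrd weylGamma a)) := by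
  have h00 := spanE_00 ▸ mem4 _ _ _ _ _ _ _ _
  have h01 := spanE_01 ▸ mem4 _ _ _ _ _ _ _ _
  have h02 := spanE_02 ▸ mem4 _ _ _ _ _ _ _ _
  have h03 := spanE_03 ▸ mem4 _ _ _ _ _ _ _ _
  have h10 := spanE_10 ▸ mem4 _ _ _ _ _ _ _ _
  have h11 := spanE_11 ▸ mem4 _ _ _ _ _ _ _ _
  have h12 := spanE_12 ▸ mem4 _ _ _ _ _ _ _ _
  have h13 := spanE_13 ▸ mem4 _ _ _ _ _ _ _ _
  have h20 := spanE_20 ▸ mem4 _ _ _ _ _ _ _ _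
  have h21 := spanE_21 ▸ mem4 _ _ _ _ _ _ _ _
  have h22 := spanE_22 ▸ mem4 _ _ _ _ _ _ _ _
  have h23 := spanE_23 ▸ mem4 _ _ _ _ _ _ _ _
  have h30 := spanE_30 ▸ mem4 _ _ _ _ _ _ _ _
  have h31 := spanE_31 ▸ mem4 _ _ _ _ _ _ _ _
  have h32 := spanE_32 ▸ mem4 _ _ _ _ _ _ _ _
  have h33 := spanE_33 ▸ mem4 _ _ _ _ _ _ _ _
  intro p q
  fin_cases p <;> fin_cases q <;> assumption

lemma top_le_span : ⊤ ≤ Submodule.span ℂ (Set.range (fun a : B4 => wrd weylGamma a)) := by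
  intro m _
  rw [Matrix.matrix_eq_sum_single m]
  refine Submodule.sum_mem _ fun i _ => Submodule.sum_mem _ fun j _ => ?_
  rw [show Matrix.single i j (m i j) = (m i j) • Matrix.single i j (1:ℂ) by
        rw [smul_single, smul_eq_mul, mul_one]]
  exact Submodule.smul_mem _ _ (std_mem i j)

lemma card_eq_finrank : Fintype.card B4 = Module.finrank ℂ Mat4 := by
  simp [Module.finrank_matrix]

lemma linIndepW : LinearIndependent ℂ (fun a : B4 => wrd weylGamma a) := by
  have := (basisOfTopLeSpanOfCardEqFinrank _ top_le_span card_eq_finrank).linearIndependent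
  rwa [coe_basisOfTopLeSpanOfCardEqFinrank] at this

lemma wrd_swap {γ δ : Fin 4 → Mat4} {L : Mat4} (h : ∀ c, γ c * L = L * δ c) (a : B4) :
    wrd γ a * L = L * wrd δ a := by
  obtain ⟨a0, a1, a2, a3⟩ := a
  have hf : ∀ (x : Bool) (i : Fin 4), pcf γ x i * L = L * pcf δ x i := by
    intro x i; cases x <;> simp [pcf, h i]
  have h0 := hf a0 0; have h1 := hf a1 1; have h2 := hf a2 2; have h3 := hf a3 3
  show pcf γ a0 0 * (pcf γ a1 1 * (pcf γ a2 2 * pcf γ a3 3)) * L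
      = L * (pcf δ a0 0 * (pcf δ a1 1 * (pcf δ a2 2 * pcf δ a3 3)))
  calc pcf γ a0 0 * (pcf γ a1 1 * (pcf γ a2 2 * pcf γ a3 3)) * L
      = pcf γ a0 0 * (pcf γ a1 1 * (pcf γ a2 2 * (pcf γ a3 3 * L))) := by
        simp only [mul_assoc]
    _ = pcf γ a0 0 * (pcf γ a1 1 * (pcf γ a2 2 * (L * pcf δ a3 3))) := by rw [h3]
    _ = pcf γ a0 0 * (pcf γ a1 1 * ((pcf γ a2 2 * L) * pcf δ a3 3)) := by
        simp only [mul_assoc]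
    _ = pcf γ a0 0 * (pcf γ a1 1 * ((L * pcf δ a2 2) * pcf δ a3 3)) := by rw [h2]
    _ = pcf γ a0 0 * ((pcf γ a1 1 * L) * (pcf δ a2 2 * pcf δ a3 3)) := by
        simp only [mul_assoc]
    _ = pcf γ a0 0 * ((L * pcf δ a1 1) * (pcf δ a2 2 * pcf δ a3 3)) := by rw [h1]
    _ = (pcf γ a0 0 * L) * (pcf δ a1 1 * (pcf δ a2 2 * pcf δ a3 3)) := by
        simp only [mul_assoc]
    _ = (L * pcf δ a0 0) * (pcf δ a1 1 * (pcf δ a2 2 * pcf δ a3 3)) := by rw [h0]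
    _ = L * (pcf δ a0 0 * (pcf δ a1 1 * (pcf δ a2 2 * pcf δ a3 3))) := by
        simp only [mul_assoc]

lemma commute_weyl_scalar {X : Mat4} (hX : ∀ b, weylGamma b * X = X * weylGamma b) :
    ∃ c : ℂ, X = c • 1 := by
  have hw : ∀ a : B4, wrd weylGamma a * X = X * wrd weylGamma a := wrd_swap hX
  have hall : ∀ m : Mat4, m * X = X * m := by
    intro m
    have hm : m ∈ Submodule.span ℂ (Set.range (fun a : B4 => wrd weylGamma a)) :=
      top_le_span Submodule.mem_top
    induction hm using Submodule.span_induction with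
    | mem x hx => obtain ⟨a, rfl⟩ := hx; exact hw a
    | zero => simp
    | add x y _ _ hx hy => rw [add_mul, mul_add, hx, hy]
    | smul c x _ hx => rw [smul_mul_assoc, mul_smul_comm, hx]
  obtain ⟨c, hc⟩ := Matrix.mem_range_scalar_of_commute_single
    (M := X) (fun i j _ => hall _)
  refine ⟨c, ?_⟩
  rw [← hc]
  ext i j
  by_cases h : i = j <;> simp [Matrix.scalar_apply, Matrix.one_apply, h]

lemma mid_std (A B : Mat4) (p q i j : Fin 4) :
    (A * Matrix.single p q (1:ℂ) * B) i j = A i p * B q j := by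
  rw [Matrix.mul_apply]
  rw [Finset.sum_eq_single q]
  · rw [Matrix.mul_single_apply_same, mul_one]
  · intro k _ hk
    rw [Matrix.mul_single_apply_of_ne (hbj := hk), zero_mul]
  · intro hq; exact absurd (Finset.mem_univ q) hq

lemma exists_pauliS_ne (γ' : Fin 4 → Mat4) : ∃ F : Mat4, pauliS γ' weylGamma F ≠ 0 := by
  by_contra hcon
  push_neg at hcon
  have hz : ∀ (i p : Fin 4) (a : B4), (uI a : ℂ) * wrd γ' a i p = 0 := by
    intro i p
    apply Fintype.linearIndependent_iff.mp linIndepW (fun a => ((uI a : ℤ) : ℂ) * wrd γ' a i p)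
    ext q j
    have h1 := congrArg (fun M : Mat4 => M i j) (hcon (Matrix.single p q 1))
    simp only [pauliS, Matrix.sum_apply, Matrix.smul_apply, smul_eq_mul, Matrix.zero_apply] at h1 ⊢
    rw [← h1]
    refine Finset.sum_congr rfl fun a _ => ?_
    rw [mid_std]
    ring
  have h1 : wrd γ' (false, false, false, false) = 1 := by simp [wrd, pcf]
  have h2 := hz 0 0 (false, false, false, false)
  rw [h1] at h2
  simp [uI, Matrix.one_apply] at h2

lemma trace_E_mul (i j : Fin 4) (L : Mat4) :
    Matrix.trace (Matrix.single j i (1:ℂ) * L) = L i j := by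
  fin_cases i <;> fin_cases j <;>
    simp [Matrix.trace, Fin.sum_univ_four]

lemma trace_TL {γ' : Fin 4 → Mat4} (F G : Mat4)
    (hint : ∀ c, γ' c * pauliS γ' weylGamma F = pauliS γ' weylGamma F * weylGamma c) :
    Matrix.trace (pauliS weylGamma γ' G * pauliS γ' weylGamma F)
      = 16 * Matrix.trace (G * pauliS γ' weylGamma F) := by
  set L := pauliS γ' weylGamma F with hLdef
  have hswap : ∀ b : B4, wrd γ' b * L = L * wrd weylGamma b := wrd_swap hint
  have hexp : pauliS weylGamma γ' G * L
      = ∑ b : B4, ((uI b : ℤ) : ℂ) • (wrd weylGamma b * G * wrd γ' b) * L := by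
    rw [pauliS, Finset.sum_mul]
  rw [hexp, Matrix.trace_sum]
  have hterm : ∀ b : B4,
      Matrix.trace (((uI b : ℤ) : ℂ) • (wrd weylGamma b * G * wrd γ' b) * L)
        = Matrix.trace (G * L) := by
    intro b
    rw [smul_mul_assoc, Matrix.trace_smul, mul_assoc, hswap b, ← mul_assoc,
      Matrix.trace_mul_comm, ← mul_assoc, ← mul_assoc, wrd_mul_self weylCliff b,
      smul_mul_assoc, smul_mul_assoc, Matrix.trace_smul, smul_eq_mul, smul_eq_mul,
      ← mul_assoc, show ((uI b : ℤ) : ℂ) * ((uI b : ℤ) : ℂ) = 1 by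
        exact_mod_cast congrArg (fun z : ℤ => (z : ℂ)) (idB b),
      one_mul, one_mul]
  rw [Finset.sum_congr rfl (fun b _ => hterm b), Finset.sum_const]
  norm_num [Finset.card_univ]

end glue

/-- **Fundamental theorem (Pauli's theorem).** Every family of complex 4×4 matrices
satisfying the Clifford relations is conjugate to the Weyl gamma matrices by an invertible
matrix `L`, and `L` is unique up to a non-zero complex factor. -/
theorem fundamental_theorem_dirac_matrices
    (γ' : Fin 4 → Matrix (Fin 4) (Fin 4) ℂ) (hγ' : CliffordRels γ') :
    ∃ L : Matrix (Fin 4) (Fin 4) ℂ, IsUnit L ∧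
      (∀ a, γ' a = L * weylGamma a * L⁻¹) ∧
      (∀ K : Matrix (Fin 4) (Fin 4) ℂ, IsUnit K →
        (∀ a, γ' a = K * weylGamma a * K⁻¹) → ∃ c : ℂ, c ≠ 0 ∧ K = c • L) := by
  obtain ⟨F, hF⟩ := exists_pauliS_ne γ'
  set L := pauliS γ' weylGamma F with hLdef
  have hint : ∀ c, γ' c * L = L * weylGamma c := fun c => gamma_pauliS hγ' weylCliff c F
  have hLent : ∃ i j, L i j ≠ 0 := by
    by_contra hno
    push_neg at hno
    exact hF (by ext i j; exact hno i j)
  obtain ⟨i, j, hij⟩ := hLent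
  set G := Matrix.single j i (1:ℂ) with hGdef
  set T := pauliS weylGamma γ' G with hTdef
  have hintT : ∀ c, weylGamma c * T = T * γ' c := fun c => gamma_pauliS weylCliff hγ' c G
  have hcommTL : ∀ b, weylGamma b * (T * L) = (T * L) * weylGamma b := by
    intro b
    calc weylGamma b * (T * L) = (weylGamma b * T) * L := (mul_assoc _ _ _).symm
      _ = (T * γ' b) * L := by rw [hintT b]
      _ = T * (γ' b * L) := mul_assoc _ _ _
      _ = T * (L * weylGamma b) := by rw [hint b]
      _ = (T * L) * weylGamma b := (mul_assoc _ _ _).symm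
  obtain ⟨c, hc⟩ := commute_weyl_scalar hcommTL
  have htr : Matrix.trace (T * L) = 16 * Matrix.trace (G * L) := trace_TL F G hint
  have htr2 : Matrix.trace (G * L) = L i j := trace_E_mul i j L
  have hc4 : c * 4 = 16 * L i j := by
    rw [← htr2, ← htr, hc]
    simp [Matrix.trace_smul, Matrix.trace_one]
  have hcne : c ≠ 0 := by
    intro h0
    rw [h0, zero_mul] at hc4
    rcases mul_eq_zero.mp hc4.symm with h | h
    · norm_num at h
    · exact hij h
  have hLinv : (c⁻¹ • T) * L = 1 := by
    rw [smul_mul_assoc, hc, smul_smul, inv_mul_cancel₀ hcne, one_smul]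
  have hLinv' : L * (c⁻¹ • T) = 1 := mul_eq_one_comm.mp hLinv
  have hunit : IsUnit L := ⟨⟨L, c⁻¹ • T, hLinv', hLinv⟩, rfl⟩
  have hLinv_eq : L⁻¹ = c⁻¹ • T := Matrix.inv_eq_right_inv hLinv'
  have hLLinv : L * L⁻¹ = 1 := by rw [hLinv_eq]; exact hLinv'
  refine ⟨L, hunit, fun a => ?_, ?_⟩
  · calc γ' a = γ' a * (L * L⁻¹) := by rw [hLLinv, mul_one]
      _ = (γ' a * L) * L⁻¹ := (mul_assoc _ _ _).symm
      _ = L * weylGamma a * L⁻¹ := by rw [hint a]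
  · intro K hK hKconj
    have hKd := (Matrix.isUnit_iff_isUnit_det K).mp hK
    have hKK : K * K⁻¹ = 1 := Matrix.mul_nonsing_inv _ hKd
    have hKK' : K⁻¹ * K = 1 := Matrix.nonsing_inv_mul _ hKd
    have h1 : ∀ a, γ' a * K = K * weylGamma a := by
      intro a
      rw [hKconj a]
      calc K * weylGamma a * K⁻¹ * K = K * weylGamma a * (K⁻¹ * K) := by rw [mul_assoc]
        _ = K * weylGamma a := by rw [hKK', mul_one]
    have hZ : ∀ a, weylGamma a * (K⁻¹ * L) = (K⁻¹ * L) * weylGamma a := by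
      intro a
      have hKc : weylGamma a * K⁻¹ = K⁻¹ * γ' a := by
        calc weylGamma a * K⁻¹ = (K⁻¹ * K) * (weylGamma a * K⁻¹) := by rw [hKK', one_mul]
          _ = K⁻¹ * (K * weylGamma a * K⁻¹) := by simp only [mul_assoc]
          _ = K⁻¹ * (γ' a * K * K⁻¹) := by rw [h1 a]
          _ = K⁻¹ * (γ' a * (K * K⁻¹)) := by rw [mul_assoc (γ' a)]
          _ = K⁻¹ * γ' a := by rw [hKK, mul_one]
      calc weylGamma a * (K⁻¹ * L) = (weylGamma a * K⁻¹) * L := (mul_assoc _ _ _).symm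
        _ = (K⁻¹ * γ' a) * L := by rw [hKc]
        _ = K⁻¹ * (γ' a * L) := mul_assoc _ _ _
        _ = K⁻¹ * (L * weylGamma a) := by rw [hint a]
        _ = (K⁻¹ * L) * weylGamma a := (mul_assoc _ _ _).symm
    obtain ⟨d, hd⟩ := commute_weyl_scalar hZ
    have hdne : d ≠ 0 := by
      intro h0
      rw [h0, zero_smul] at hd
      have hL0 : L = 0 := by
        calc L = K * (K⁻¹ * L) := by rw [← mul_assoc, hKK, one_mul]
          _ = K * 0 := by rw [hd]
          _ = 0 := mul_zero K
      exact hF hL0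
    refine ⟨d⁻¹, inv_ne_zero hdne, ?_⟩
    have hL_eq : L = d • K := by
      calc L = K * (K⁻¹ * L) := by rw [← mul_assoc, hKK, one_mul]
        _ = K * (d • 1) := by rw [hd]
        _ = d • K := by rw [mul_smul_comm, mul_one]
    rw [hL_eq, smul_smul, inv_mul_cancel₀ hdne, one_smul]

end
end

section
/- Let γ_0,γ_1,γ_2,γ_3 be complex 4×4 matrices satisfying the Clifford relations. For every real 4×4 matrix Λ with Λᵀ η Λ = η (i.e. every Lorentz transformation) there exist finitely many vectors u₁,…,u_k ∈ ℝ⁴ with slash(u_i)² = I or slash(u_i)² = −I for each i, such that the (invertible) matrix S := slash(u₁)···slash(u_k) satisfies S γ_b S⁻¹ = Σ_{a=0}^{3} Λ_{ab} γ_a for all b ∈ {0,1,2,3}. -/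
open Matrix

noncomputable section

/-- The Minkowski metric as a real 4×4 matrix. -/
def minkEtaMatrix : Matrix (Fin 4) (Fin 4) ℝ := Matrix.of minkEta

/-- `slash γ v = Σ_a v_a γ_a` for a real vector `v`. -/
def slash (γ : Fin 4 → Matrix (Fin 4) (Fin 4) ℂ) (v : Fin 4 → ℝ) :
    Matrix (Fin 4) (Fin 4) ℂ :=
  ∑ a, (v a : ℂ) • γ a

/-- Minkowski bilinear form. -/
def Bf (x y : Fin 4 → ℝ) : ℝ := x ⬝ᵥ minkEtaMatrix *ᵥ y

def Qf (u : Fin 4 → ℝ) : ℝ := Bf u u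

lemma minkEta_transpose : minkEtaMatrixᵀ = minkEtaMatrix := by
  ext a b
  fin_cases a <;> fin_cases b <;> simp [minkEtaMatrix, minkEta, Matrix.transpose_apply]

lemma Bf_comm (x y : Fin 4 → ℝ) : Bf x y = Bf y x := by
  rw [Bf, Bf, Matrix.dotProduct_mulVec, ← minkEta_transpose, Matrix.vecMul_transpose,
    minkEta_transpose, dotProduct_comm]

lemma Bf_add_left (x y z : Fin 4 → ℝ) : Bf (x + y) z = Bf x z + Bf y z := by
  simp [Bf, add_dotProduct]

lemma Bf_add_right (x y z : Fin 4 → ℝ) : Bf x (y + z) = Bf x y + Bf x z := by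
  simp [Bf, Matrix.mulVec_add, dotProduct_add]

lemma Bf_smul_left (c : ℝ) (x y : Fin 4 → ℝ) : Bf (c • x) y = c * Bf x y := by
  simp [Bf, smul_dotProduct]

lemma Bf_smul_right (c : ℝ) (x y : Fin 4 → ℝ) : Bf x (c • y) = c * Bf x y := by
  simp [Bf, Matrix.mulVec_smul, dotProduct_smul]

lemma Bf_sub_left (x y z : Fin 4 → ℝ) : Bf (x - y) z = Bf x z - Bf y z := by
  simp [Bf, sub_dotProduct]

lemma Bf_sub_right (x y z : Fin 4 → ℝ) : Bf x (y - z) = Bf x y - Bf x z := by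
  simp [Bf, Matrix.mulVec_sub, dotProduct_sub]

/-- Reflection along an anisotropic vector `u`. -/
def Rf (u : Fin 4 → ℝ) : Matrix (Fin 4) (Fin 4) ℝ :=
  1 - (2 / Qf u) • Matrix.vecMulVec u (minkEtaMatrix *ᵥ u)

lemma Rf_mulVec (u x : Fin 4 → ℝ) :
    Rf u *ᵥ x = x - (2 / Qf u * Bf u x) • u := by
  ext i
  simp only [Rf, Matrix.sub_mulVec, Matrix.one_mulVec, Matrix.smul_mulVec,
    Pi.sub_apply, Pi.smul_apply, smul_eq_mul]
  have h1 : (Matrix.vecMulVec u (minkEtaMatrix *ᵥ u) *ᵥ x) i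
      = u i * ((minkEtaMatrix *ᵥ u) ⬝ᵥ x) := by
    simp only [Matrix.mulVec, dotProduct, Matrix.vecMulVec_apply, Finset.mul_sum]
    apply Finset.sum_congr rfl; intro j _
    rw [show (∑ k, u i * (minkEtaMatrix j k * u k))
      = u i * ∑ k, minkEtaMatrix j k * u k from by rw [Finset.mul_sum]]; ring
  have h2 : (minkEtaMatrix *ᵥ u) ⬝ᵥ x = Bf u x := by
    rw [dotProduct_comm, ← Bf, Bf_comm]
  rw [h1, h2]; ring

lemma Qf_eq (u : Fin 4 → ℝ) : Bf u u = Qf u := rfl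

lemma Bf_neg_left (x y : Fin 4 → ℝ) : Bf (-x) y = - Bf x y := by
  simp [Bf, neg_dotProduct]

lemma Qf_neg (v : Fin 4 → ℝ) : Qf (-v) = Qf v := by
  have : Bf (-v) (-v) = - Bf v (-v) := Bf_neg_left _ _
  rw [Qf, this, Bf_comm, Bf_neg_left, Qf_eq]; ring

lemma Qf_smul (c : ℝ) (u : Fin 4 → ℝ) : Qf (c • u) = c ^ 2 * Qf u := by
  rw [Qf, Bf_smul_left, Bf_smul_right, Qf_eq]; ring

lemma Matrix.ext_of_mulVec {M N : Matrix (Fin 4) (Fin 4) ℝ}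
    (h : ∀ x, M *ᵥ x = N *ᵥ x) : M = N := by
  ext i j
  have := congrFun (h (Pi.single j 1)) i
  simpa [Matrix.mulVec_single] using this

lemma Rf_preserves (u : Fin 4 → ℝ) (hu : Qf u ≠ 0) (x y : Fin 4 → ℝ) :
    Bf (Rf u *ᵥ x) (Rf u *ᵥ y) = Bf x y := by
  rw [Rf_mulVec, Rf_mulVec, Bf_sub_left, Bf_sub_right, Bf_sub_right, Bf_smul_right,
    Bf_smul_left, Bf_smul_left, Bf_smul_right, Qf_eq, Bf_comm x u]
  field_simp
  ring

lemma Rf_invol (u : Fin 4 → ℝ) (hu : Qf u ≠ 0) : Rf u * Rf u = 1 := by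
  apply Matrix.ext_of_mulVec
  intro x
  rw [← Matrix.mulVec_mulVec, Rf_mulVec, Rf_mulVec, Bf_sub_right, Bf_smul_right, Qf_eq,
    Matrix.one_mulVec]
  ext i
  simp only [Pi.sub_apply, Pi.smul_apply, smul_eq_mul]
  field_simp
  ring

lemma Rf_fix (u y : Fin 4 → ℝ) (h : Bf u y = 0) : Rf u *ᵥ y = y := by
  rw [Rf_mulVec, h]
  simp

lemma Rf_map (v w : Fin 4 → ℝ) (hq : Qf w = Qf v) (hu : Qf (w - v) ≠ 0) :
    Rf (w - v) *ᵥ w = v := by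
  have e1 : Qf (w - v) = Bf w w - Bf v w - (Bf w v - Bf v v) := by
    rw [Qf, Bf_sub_left, Bf_sub_right, Bf_sub_right]; ring
  have e2 : Bf (w - v) w = Bf w w - Bf v w := Bf_sub_left _ _ _
  have e3 : Bf w v = Bf v w := Bf_comm _ _
  have hb : Qf (w - v) = 2 * Bf (w - v) w := by
    rw [e1, e2, e3, Qf_eq, Qf_eq, hq]; ring
  have hbw : Bf (w - v) w ≠ 0 := by
    intro h0; rw [h0] at hb; simp at hb; exact hu hb
  rw [Rf_mulVec, show 2 / Qf (w - v) * Bf (w - v) w = 1 from by rw [hb]; field_simp]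
  ext i; simp

lemma Rf_smul (c : ℝ) (hc : c ≠ 0) (u : Fin 4 → ℝ) (hu : Qf u ≠ 0) :
    Rf (c • u) = Rf u := by
  ext i j
  simp only [Rf, Matrix.sub_apply, Matrix.smul_apply, Matrix.vecMulVec_apply,
    Matrix.mulVec_smul, Qf_smul, Pi.smul_apply, smul_eq_mul]
  field_simp

lemma exists_normal (u : Fin 4 → ℝ) (hu : Qf u ≠ 0) :
    ∃ u', (Qf u' = 1 ∨ Qf u' = -1) ∧ Rf u' = Rf u := by
  set c : ℝ := (Real.sqrt |Qf u|)⁻¹ with hc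
  have habs : (0:ℝ) < |Qf u| := abs_pos.mpr hu
  have hs : Real.sqrt |Qf u| ≠ 0 := by positivity
  have hcne : c ≠ 0 := by simp [hc, hs]
  refine ⟨c • u, ?_, Rf_smul c hcne u hu⟩
  have hc2 : c ^ 2 = (|Qf u|)⁻¹ := by
    rw [hc, ← Real.sqrt_inv, Real.sq_sqrt (by positivity)]
  rw [Qf_smul, hc2]
  rcases lt_or_gt_of_ne hu with h | h
  · right; rw [abs_of_neg h]; field_simp
  · left; rw [abs_of_pos h]; field_simp

lemma Bf_single (i j : Fin 4) : Bf (Pi.single i 1) (Pi.single j 1) = minkEtaMatrix i j := by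
  simp [Bf, Matrix.mulVec_single, single_dotProduct]

lemma Qf_single (j : Fin 4) : Qf (Pi.single j 1) = minkEtaMatrix j j := Bf_single j j

lemma minkEta_diag_ne (j : Fin 4) : minkEtaMatrix j j ≠ 0 := by
  fin_cases j <;> norm_num [minkEtaMatrix, minkEta, Fin.ext_iff]

/-- Preservation of the Minkowski form. -/
def OrthB (σ : Matrix (Fin 4) (Fin 4) ℝ) : Prop :=
  ∀ x y, Bf (σ *ᵥ x) (σ *ᵥ y) = Bf x y

lemma Rf_neg_self (v : Fin 4 → ℝ) (hv : Qf v ≠ 0) : Rf v *ᵥ (-v) = v := by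
  rw [Rf_mulVec]
  have h1 : Bf v (-v) = - Qf v := by rw [Bf_comm, Bf_neg_left, Qf_eq]
  have h2 : 2 / Qf v * Bf v (-v) = -2 := by rw [h1]; field_simp
  rw [h2]
  ext i
  simp
  ring

lemma CD_aux : ∀ m : ℕ, m ≤ 4 → ∀ σ : Matrix (Fin 4) (Fin 4) ℝ, OrthB σ →
    (∀ i : Fin 4, (i : ℕ) < 4 - m → σ *ᵥ Pi.single i 1 = Pi.single i 1) →
    ∃ l : List (Fin 4 → ℝ), (∀ u ∈ l, Qf u ≠ 0) ∧ σ = (l.map Rf).prod := by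
  intro m
  induction m with
  | zero =>
    intro _ σ _ hfix
    refine ⟨[], by simp, ?_⟩
    ext i j
    have h2 : σ i j = (Pi.single j (1:ℝ) : Fin 4 → ℝ) i := by
      simpa using congrFun (hfix j (by omega)) i
    simp only [List.map_nil, List.prod_nil]
    rw [h2, Matrix.one_apply, Pi.single_apply]
  | succ m ih =>
    intro hm σ horth hfix
    set j : Fin 4 := ⟨3 - m, by omega⟩ with hj
    set v : Fin 4 → ℝ := Pi.single j 1 with hv
    set w : Fin 4 → ℝ := σ *ᵥ v with hw
    have hji : (j : ℕ) = 3 - m := rfl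
    have hQv : Qf v ≠ 0 := by rw [hv, Qf_single]; exact minkEta_diag_ne j
    have hQw : Qf w = Qf v := horth v v
    -- orthogonality of v and w to earlier basis vectors
    have hvperp : ∀ i : Fin 4, (i : ℕ) < 3 - m → Bf v (Pi.single i 1) = 0 := by
      intro i hi
      rw [hv, Bf_single]
      have hne : j ≠ i := fun h => absurd hi (by rw [← h, hji]; omega)
      simp [minkEtaMatrix, minkEta, hne]
    have hwperp : ∀ i : Fin 4, (i : ℕ) < 3 - m → Bf w (Pi.single i 1) = 0 := by
      intro i hi
      have := horth v (Pi.single i 1)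
      rw [hfix i (by omega)] at this
      rw [hw, this]
      exact hvperp i hi
    have hsum : Qf (w - v) + Qf (w + v) = 4 * Qf v := by
      rw [Qf, Qf, Bf_sub_left, Bf_sub_right, Bf_sub_right, Bf_add_left, Bf_add_right,
        Bf_add_right, Bf_comm w v, Qf_eq, Qf_eq, hQw]
      ring
    have hlt : (3 - m : ℕ) < 4 - m := by omega
    by_cases hc : Qf (w - v) ≠ 0
    · -- one reflection suffices
      set u : Fin 4 → ℝ := w - v with hu
      have hmapw : Rf u *ᵥ w = v := Rf_map v w hQw hc
      have horth' : OrthB (Rf u * σ) := by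
        intro x y
        rw [← Matrix.mulVec_mulVec, ← Matrix.mulVec_mulVec, Rf_preserves u hc]
        exact horth x y
      have hfix' : ∀ i : Fin 4, (i : ℕ) < 4 - m → (Rf u * σ) *ᵥ Pi.single i 1 = Pi.single i 1 := by
        intro i hi
        rw [← Matrix.mulVec_mulVec]
        rcases Nat.lt_or_ge (i : ℕ) (3 - m) with h | h
        · rw [hfix i (by omega)]
          exact Rf_fix u _ (by rw [hu, Bf_sub_left, hwperp i h, hvperp i h]; ring)
        · have : i = j := by rw [Fin.ext_iff, hji]; omega
          rw [this, ← hv, ← hw]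
          exact hmapw
      obtain ⟨l', hl', heq⟩ := ih (by omega) (Rf u * σ) horth' hfix'
      refine ⟨u :: l', ?_, ?_⟩
      · intro x hx
        rcases List.mem_cons.mp hx with h | h
        · rw [h]; exact hc
        · exact hl' x h
      · have : Rf u * (Rf u * σ) = σ := by rw [← Matrix.mul_assoc, Rf_invol u hc, Matrix.one_mul]
        rw [List.map_cons, List.prod_cons, ← heq, this]
    · -- two reflections
      push_neg at hc
      have hc2 : Qf (w + v) ≠ 0 := by
        intro h0; rw [hc, h0] at hsum; simp at hsum
        exact hQv (by linarith)
      set u : Fin 4 → ℝ := w + v with hu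
      have huwv : u = w - (-v) := by rw [hu]; ext i; simp
      have hmapw : Rf u *ᵥ w = -v := by
        rw [huwv]
        exact Rf_map (-v) w (by rw [Qf_neg]; exact hQw) (by rw [← huwv]; exact hc2)
      have horth' : OrthB (Rf v * (Rf u * σ)) := by
        intro x y
        simp only [← Matrix.mulVec_mulVec]
        rw [Rf_preserves v hQv, Rf_preserves u hc2]
        exact horth x y
      have hfix' : ∀ i : Fin 4, (i : ℕ) < 4 - m →
          (Rf v * (Rf u * σ)) *ᵥ Pi.single i 1 = Pi.single i 1 := by
        intro i hi
        rw [← Matrix.mulVec_mulVec, ← Matrix.mulVec_mulVec]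
        rcases Nat.lt_or_ge (i : ℕ) (3 - m) with h | h
        · rw [hfix i (by omega),
            Rf_fix u _ (by rw [hu, Bf_add_left, hwperp i h, hvperp i h]; ring),
            Rf_fix v _ (hvperp i h)]
        · have : i = j := by rw [Fin.ext_iff, hji]; omega
          rw [this, ← hv, ← hw, hmapw]
          exact Rf_neg_self v hQv
      obtain ⟨l', hl', heq⟩ := ih (by omega) _ horth' hfix'
      refine ⟨u :: v :: l', ?_, ?_⟩
      · intro x hx
        rcases List.mem_cons.mp hx with h | hx
        · rw [h]; exact hc2
        rcases List.mem_cons.mp hx with h | h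
        · rw [h]; exact hQv
        · exact hl' x h
      · have h1 : Rf v * (Rf v * (Rf u * σ)) = Rf u * σ := by
          rw [← Matrix.mul_assoc, Rf_invol v hQv, Matrix.one_mul]
        have h2 : Rf u * (Rf u * σ) = σ := by
          rw [← Matrix.mul_assoc, Rf_invol u hc2, Matrix.one_mul]
        rw [List.map_cons, List.prod_cons, List.map_cons, List.prod_cons, ← heq, h1, h2]

lemma orthB_of_lorentz {Λ : Matrix (Fin 4) (Fin 4) ℝ}
    (hΛ : Λᵀ * minkEtaMatrix * Λ = minkEtaMatrix) : OrthB Λ := by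
  intro x y
  have h1 : ∀ (z : Fin 4 → ℝ), (Λ *ᵥ x) ⬝ᵥ z = x ⬝ᵥ (Λᵀ *ᵥ z) := by
    intro z
    rw [dotProduct_comm, Matrix.dotProduct_mulVec, dotProduct_comm]
    congr 1
    rw [← Matrix.transpose_transpose Λ, Matrix.vecMul_transpose, Matrix.transpose_transpose]
  rw [Bf, Matrix.mulVec_mulVec, h1, Matrix.mulVec_mulVec, ← Matrix.mul_assoc, hΛ, ← Bf]

lemma normalize_list : ∀ l : List (Fin 4 → ℝ), (∀ u ∈ l, Qf u ≠ 0) →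
    ∃ l' : List (Fin 4 → ℝ), (∀ u ∈ l', Qf u = 1 ∨ Qf u = -1) ∧
      (l'.map Rf).prod = (l.map Rf).prod := by
  intro l
  induction l with
  | nil => exact fun _ => ⟨[], by simp, rfl⟩
  | cons u l ih =>
    intro h
    obtain ⟨l', hl', heq⟩ := ih (fun x hx => h x (List.mem_cons_of_mem u hx))
    obtain ⟨u', hu', hru⟩ := exists_normal u (h u (List.mem_cons_self))
    refine ⟨u' :: l', ?_, ?_⟩
    · intro x hx
      rcases List.mem_cons.mp hx with hx | hx
      · rw [hx]; exact hu'
      · exact hl' x hx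
    · rw [List.map_cons, List.prod_cons, List.map_cons, List.prod_cons, heq, hru]

/-- Cartan–Dieudonné for the Lorentz group: decomposition into normalized reflections. -/
lemma lorentz_reflections {Λ : Matrix (Fin 4) (Fin 4) ℝ}
    (hΛ : Λᵀ * minkEtaMatrix * Λ = minkEtaMatrix) :
    ∃ l : List (Fin 4 → ℝ), (∀ u ∈ l, Qf u = 1 ∨ Qf u = -1) ∧ Λ = (l.map Rf).prod := by
  obtain ⟨l, hl, heq⟩ := CD_aux 4 (by norm_num) Λ (orthB_of_lorentz hΛ) (by omega)
  obtain ⟨l', hl', heq'⟩ := normalize_list l hl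
  exact ⟨l', hl', by rw [heq, heq']⟩

lemma etaMulVec (u : Fin 4 → ℝ) (b : Fin 4) :
    (minkEtaMatrix *ᵥ u) b = minkEtaMatrix b b * u b := by
  simp only [Matrix.mulVec, dotProduct]
  rw [Finset.sum_eq_single b]
  · intro c _ hc
    simp [minkEtaMatrix, minkEta, Ne.symm hc]
  · simp

lemma Qf_expand (u : Fin 4 → ℝ) : Qf u = ∑ b, minkEtaMatrix b b * u b ^ 2 := by
  rw [Qf, Bf]
  simp only [dotProduct]
  apply Finset.sum_congr rfl
  intro b _
  rw [etaMulVec]; ring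

section Cliff

variable (γ : Fin 4 → Matrix (Fin 4) (Fin 4) ℂ)

lemma slash_anticomm (hγ : CliffordRels γ) (u : Fin 4 → ℝ) (b : Fin 4) :
    slash γ u * γ b + γ b * slash γ u
      = ((2 * minkEtaMatrix b b * u b : ℝ) : ℂ) • 1 := by
  rw [slash, Finset.sum_mul, Finset.mul_sum, ← Finset.sum_add_distrib]
  have : ∀ a, (u a : ℂ) • γ a * γ b + γ b * (u a : ℂ) • γ a
      = ((u a * 2 * minkEta a b : ℝ) : ℂ) • (1 : Matrix (Fin 4) (Fin 4) ℂ) := by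
    intro a
    rw [smul_mul_assoc, mul_smul_comm, ← smul_add, hγ a b, smul_smul]
    push_cast
    ring_nf
  rw [Finset.sum_congr rfl (fun a _ => this a), Finset.sum_eq_single b]
  · congr 1
    rw [show minkEtaMatrix b b = minkEta b b from rfl]
    push_cast
    ring
  · intro a _ ha
    simp [minkEta, ha]
  · simp

lemma slash_sq (hγ : CliffordRels γ) (u : Fin 4 → ℝ) : slash γ u ^ 2 = ((Qf u : ℝ) : ℂ) • 1 := by
  have key : slash γ u ^ 2 + slash γ u ^ 2 = ((2 * Qf u : ℝ) : ℂ) • 1 := by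
    have h1 : slash γ u ^ 2 = ∑ b, (u b : ℂ) • (slash γ u * γ b) := by
      rw [pow_two]
      conv_lhs => rw [show slash γ u * slash γ u = slash γ u * ∑ b, (u b : ℂ) • γ b from rfl]
      rw [Finset.mul_sum]
      exact Finset.sum_congr rfl fun b _ => mul_smul_comm _ _ _
    have h2 : slash γ u ^ 2 = ∑ b, (u b : ℂ) • (γ b * slash γ u) := by
      rw [pow_two]
      conv_lhs => rw [show slash γ u * slash γ u = (∑ b, (u b : ℂ) • γ b) * slash γ u from rfl]
      rw [Finset.sum_mul]
      exact Finset.sum_congr rfl fun b _ => smul_mul_assoc _ _ _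
    nth_rewrite 2 [h2]
    nth_rewrite 1 [h1]
    rw [← Finset.sum_add_distrib]
    have : ∀ b, (u b : ℂ) • (slash γ u * γ b) + (u b : ℂ) • (γ b * slash γ u)
        = ((u b * (2 * minkEtaMatrix b b * u b) : ℝ) : ℂ) • (1 : Matrix (Fin 4) (Fin 4) ℂ) := by
      intro b
      rw [← smul_add, slash_anticomm γ hγ u b, smul_smul]
      push_cast; ring_nf
    rw [Finset.sum_congr rfl fun b _ => this b, ← Finset.sum_smul]
    congr 1
    rw [Qf_expand]
    push_cast
    rw [Finset.mul_sum]
    exact Finset.sum_congr rfl fun b _ => by ring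
  have h2 : (2 : ℂ) • slash γ u ^ 2 = (2 : ℂ) • (((Qf u : ℝ) : ℂ) • 1) := by
    rw [two_smul, key, smul_smul]
    push_cast; ring_nf
  exact smul_right_injective _ (two_ne_zero) h2

end Cliff

/-- `M` is implemented by a product of Clifford units. -/
def Impl (γ : Fin 4 → Matrix (Fin 4) (Fin 4) ℂ) (M : Matrix (Fin 4) (Fin 4) ℝ) : Prop :=
  ∃ l : List (Fin 4 → ℝ),
    (∀ u ∈ l, slash γ u ^ 2 = 1 ∨ slash γ u ^ 2 = -1) ∧
    IsUnit ((l.map (slash γ)).prod) ∧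
    ∀ b, (l.map (slash γ)).prod * γ b =
      (∑ a, (M a b : ℂ) • γ a) * (l.map (slash γ)).prod

lemma Impl_one (γ : Fin 4 → Matrix (Fin 4) (Fin 4) ℂ) : Impl γ 1 := by
  refine ⟨[], by simp, by simp, ?_⟩
  intro b
  rw [List.map_nil, List.prod_nil, one_mul, mul_one]
  rw [Finset.sum_eq_single b]
  · simp [Matrix.one_apply]
  · intro a _ ha
    simp [Matrix.one_apply, ha]
  · simp

lemma Impl_mul (γ : Fin 4 → Matrix (Fin 4) (Fin 4) ℂ) {M N : Matrix (Fin 4) (Fin 4) ℝ}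
    (hM : Impl γ M) (hN : Impl γ N) : Impl γ (M * N) := by
  obtain ⟨l₁, hu₁, hiu₁, hc₁⟩ := hM
  obtain ⟨l₂, hu₂, hiu₂, hc₂⟩ := hN
  refine ⟨l₁ ++ l₂, ?_, ?_, ?_⟩
  · intro u hu
    rcases List.mem_append.mp hu with h | h
    · exact hu₁ u h
    · exact hu₂ u h
  · rw [List.map_append, List.prod_append]
    exact hiu₁.mul hiu₂
  · intro b
    rw [List.map_append, List.prod_append]
    set S₁ := (l₁.map (slash γ)).prod
    set S₂ := (l₂.map (slash γ)).prod
    calc S₁ * S₂ * γ b = S₁ * (S₂ * γ b) := by rw [mul_assoc]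
      _ = S₁ * ((∑ c, (N c b : ℂ) • γ c) * S₂) := by rw [hc₂ b]
      _ = (S₁ * (∑ c, (N c b : ℂ) • γ c)) * S₂ := by rw [mul_assoc]
      _ = (∑ c, (N c b : ℂ) • (S₁ * γ c)) * S₂ := by
          rw [Finset.mul_sum]
          congr 1
          exact Finset.sum_congr rfl fun c _ => mul_smul_comm _ _ _
      _ = (∑ c, (N c b : ℂ) • ((∑ a, (M a c : ℂ) • γ a) * S₁)) * S₂ := by
          congr 1
          exact Finset.sum_congr rfl fun c _ => by rw [hc₁ c]
      _ = ((∑ c, (N c b : ℂ) • (∑ a, (M a c : ℂ) • γ a)) * S₁) * S₂ := by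
          have hpull : (∑ c, (N c b : ℂ) • ((∑ a, (M a c : ℂ) • γ a) * S₁))
              = (∑ c, (N c b : ℂ) • (∑ a, (M a c : ℂ) • γ a)) * S₁ := by
            rw [Finset.sum_mul]
            exact Finset.sum_congr rfl fun c _ => (smul_mul_assoc _ _ _).symm
          rw [hpull]
      _ = (∑ a, ((M * N) a b : ℂ) • γ a) * (S₁ * S₂) := by
          have hsum : (∑ c, (N c b : ℂ) • (∑ a, (M a c : ℂ) • γ a))
              = ∑ a, ((M * N) a b : ℂ) • γ a := by
            simp only [Finset.smul_sum, smul_smul]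
            rw [Finset.sum_comm]
            apply Finset.sum_congr rfl
            intro a _
            rw [← Finset.sum_smul]
            congr 1
            rw [Matrix.mul_apply]
            push_cast
            exact Finset.sum_congr rfl fun c _ => mul_comm _ _
          rw [hsum, mul_assoc]

lemma sum_one_entry_smul (γ : Fin 4 → Matrix (Fin 4) (Fin 4) ℂ) (b : Fin 4) :
    (∑ a, (((1 : Matrix (Fin 4) (Fin 4) ℝ) a b : ℝ) : ℂ) • γ a) = γ b := by
  rw [Finset.sum_eq_single b]
  · simp [Matrix.one_apply]
  · intro a _ ha
    simp [Matrix.one_apply, ha]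
  · simp

lemma Impl_single (γ : Fin 4 → Matrix (Fin 4) (Fin 4) ℂ) (hγ : CliffordRels γ)
    (u : Fin 4 → ℝ) (hQ : Qf u = 1 ∨ Qf u = -1) : Impl γ (-(Rf u)) := by
  have hQne : Qf u ≠ 0 := by rcases hQ with h | h <;> rw [h] <;> norm_num
  have hsq : slash γ u ^ 2 = 1 ∨ slash γ u ^ 2 = -1 := by
    rw [slash_sq γ hγ u]
    rcases hQ with h | h
    · left; rw [h]; simp
    · right; rw [h]; push_cast; simp
  refine ⟨[u], ?_, ?_, ?_⟩
  · intro x hx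
    rw [List.mem_singleton.mp hx]
    exact hsq
  · rw [List.map_singleton, List.prod_singleton]
    rcases hsq with h | h
    · rw [pow_two] at h
      exact ⟨⟨slash γ u, slash γ u, h, h⟩, rfl⟩
    · rw [pow_two] at h
      have h2 : slash γ u * (-(slash γ u)) = 1 := by rw [mul_neg, h]; simp
      have h3 : (-(slash γ u)) * slash γ u = 1 := by rw [neg_mul, h]; simp
      exact ⟨⟨slash γ u, -(slash γ u), h2, h3⟩, rfl⟩
  · intro b
    rw [List.map_singleton, List.prod_singleton]
    set c : ℝ := 2 / Qf u * (minkEtaMatrix b b * u b) with hc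
    have hent : (∑ a, (((-(Rf u)) a b : ℝ) : ℂ) • γ a)
        = (c : ℂ) • slash γ u - γ b := by
      have h1 : ∀ a, ((-(Rf u)) a b : ℝ) = c * u a - (1 : Matrix (Fin 4) (Fin 4) ℝ) a b := by
        intro a
        simp only [Rf, Matrix.neg_apply, Matrix.sub_apply, Matrix.smul_apply,
          Matrix.vecMulVec_apply, smul_eq_mul, hc, etaMulVec]
        ring
      have h2 : ∀ a, ((c * u a - (1 : Matrix (Fin 4) (Fin 4) ℝ) a b : ℝ) : ℂ) • γ a
          = ((c * u a : ℝ) : ℂ) • γ a - (((1 : Matrix (Fin 4) (Fin 4) ℝ) a b : ℝ) : ℂ) • γ a := by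
        intro a
        rw [Complex.ofReal_sub, sub_smul]
      rw [Finset.sum_congr rfl fun a _ => by rw [h1 a],
        Finset.sum_congr rfl fun a _ => h2 a,
        Finset.sum_sub_distrib, sum_one_entry_smul γ b]
      congr 1
      rw [slash, Finset.smul_sum]
      apply Finset.sum_congr rfl
      intro a _
      rw [smul_smul]
      push_cast
      ring_nf
    rw [hent, sub_mul, smul_mul_assoc, ← pow_two, slash_sq γ hγ u, smul_smul]
    have hcq : (c : ℂ) * ((Qf u : ℝ) : ℂ) = ((2 * minkEtaMatrix b b * u b : ℝ) : ℂ) := by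
      rw [← Complex.ofReal_mul]
      congr 1
      rw [hc]
      field_simp
    rw [hcq]
    have := slash_anticomm γ hγ u b
    rw [eq_sub_of_add_eq this]

lemma Rf_single_diag (i : Fin 4) :
    Rf (Pi.single i 1) = Matrix.diagonal (fun a => if a = i then (-1 : ℝ) else 1) := by
  have hQ : Qf (Pi.single i (1:ℝ)) = minkEtaMatrix i i := Qf_single i
  ext a b
  simp only [Rf, Matrix.sub_apply, Matrix.one_apply, Matrix.smul_apply,
    Matrix.vecMulVec_apply, smul_eq_mul, hQ, etaMulVec, Matrix.diagonal_apply,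
    Pi.single_apply]
  fin_cases i <;> fin_cases a <;> fin_cases b <;>
    norm_num [minkEtaMatrix, minkEta, Fin.ext_iff]

lemma Qf_single_pm (i : Fin 4) : Qf (Pi.single i 1) = 1 ∨ Qf (Pi.single i 1) = -1 := by
  rw [Qf_single]
  fin_cases i <;> norm_num [minkEtaMatrix, minkEta, Fin.ext_iff]

lemma Impl_neg_one (γ : Fin 4 → Matrix (Fin 4) (Fin 4) ℂ) (hγ : CliffordRels γ) :
    Impl γ (-1) := by
  have h01 := Impl_mul γ (Impl_single γ hγ _ (Qf_single_pm 0)) (Impl_single γ hγ _ (Qf_single_pm 1))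
  have h23 := Impl_mul γ (Impl_single γ hγ _ (Qf_single_pm 2)) (Impl_single γ hγ _ (Qf_single_pm 3))
  have h := Impl_mul γ h01 h23
  have heq : -Rf (Pi.single 0 1) * -Rf (Pi.single 1 1) * (-Rf (Pi.single 2 1) * -Rf (Pi.single 3 1))
      = (-1 : Matrix (Fin 4) (Fin 4) ℝ) := by
    have hneg : ∀ f : Fin 4 → ℝ, -Matrix.diagonal f = Matrix.diagonal (fun i => -f i) :=
      fun f => Matrix.diagonal_neg f
    rw [Rf_single_diag 0, Rf_single_diag 1, Rf_single_diag 2, Rf_single_diag 3,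
      hneg, hneg, hneg, hneg, Matrix.diagonal_mul_diagonal, Matrix.diagonal_mul_diagonal,
      Matrix.diagonal_mul_diagonal]
    ext a b
    simp only [Matrix.diagonal_apply, Matrix.neg_apply, Matrix.one_apply, Pi.mul_apply]
    fin_cases a <;> fin_cases b <;> norm_num [Fin.ext_iff] <;> decide
  rwa [heq] at h

lemma Impl_of_R_list (γ : Fin 4 → Matrix (Fin 4) (Fin 4) ℂ) (hγ : CliffordRels γ) :
    ∀ l : List (Fin 4 → ℝ), (∀ u ∈ l, Qf u = 1 ∨ Qf u = -1) →
    Impl γ ((l.map Rf).prod) := by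
  intro l
  induction l with
  | nil => intro _; simpa using Impl_one γ
  | cons u l ih =>
    intro h
    have h1 := Impl_single γ hγ u (h u (List.mem_cons_self))
    have h2 := Impl_mul γ (Impl_neg_one γ hγ) (ih fun x hx => h x (List.mem_cons_of_mem u hx))
    have h3 := Impl_mul γ h1 h2
    have heq : -Rf u * (-1 * (l.map Rf).prod) = ((u :: l).map Rf).prod := by
      rw [List.map_cons, List.prod_cons, neg_one_mul, mul_neg, neg_mul, neg_neg]
    rwa [heq] at h3

/-- Every Lorentz transformation `Λ` is implemented by a finite product `S` of unit
vectors of the Clifford algebra: `S γ_b S⁻¹ = Σ_a Λ_{ab} γ_a`. -/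
theorem lorentz_implemented_by_product_of_reflections
    (γ : Fin 4 → Matrix (Fin 4) (Fin 4) ℂ) (hγ : CliffordRels γ)
    (Λ : Matrix (Fin 4) (Fin 4) ℝ) (hΛ : Λᵀ * minkEtaMatrix * Λ = minkEtaMatrix) :
    ∃ l : List (Fin 4 → ℝ),
      (∀ u ∈ l, slash γ u ^ 2 = 1 ∨ slash γ u ^ 2 = -1) ∧
      IsUnit ((l.map (slash γ)).prod) ∧
      ∀ b, (l.map (slash γ)).prod * γ b * ((l.map (slash γ)).prod)⁻¹ =
        ∑ a, (Λ a b : ℂ) • γ a := by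
  obtain ⟨l, hnorm, heq⟩ := lorentz_reflections hΛ
  have himpl : Impl γ Λ := by
    rw [heq]
    exact Impl_of_R_list γ hγ l hnorm
  obtain ⟨l', hsq, hiu, hc⟩ := himpl
  refine ⟨l', hsq, hiu, ?_⟩
  intro b
  have hdet : IsUnit ((l'.map (slash γ)).prod).det :=
    (Matrix.isUnit_iff_isUnit_det _).mp hiu
  have hinv : (l'.map (slash γ)).prod * ((l'.map (slash γ)).prod)⁻¹ = 1 :=
    Matrix.mul_nonsing_inv _ hdet
  rw [hc b, mul_assoc, hinv, mul_one]
end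
end

section
/- Let γ_0,γ_1,γ_2,γ_3 be the Weyl gamma matrices and D the real subalgebra of the complex 4×4 matrices they generate. If S ∈ D satisfies det S = 1 and S γ_a = γ_a S for all a ∈ {0,1,2,3}, then S = I or S = −I. -/
set_option maxHeartbeats 1000000

open Matrix

noncomputable section

/-- The Dirac algebra `D`: the real subalgebra of the complex 4×4 matrices generated by
the Weyl gamma matrices. -/
def diracSubalgebra : Subalgebra ℝ (Matrix (Fin 4) (Fin 4) ℂ) :=
  Algebra.adjoin ℝ (Set.range weylGamma)

/-- The "charge conjugation" matrix `γ₀ γ₁ γ₃`. -/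
def conjMat : Matrix (Fin 4) (Fin 4) ℂ := weylGamma 0 * weylGamma 1 * weylGamma 3

lemma conjMat_fix (x : Matrix (Fin 4) (Fin 4) ℂ) (hx : x ∈ diracSubalgebra) :
    conjMat * x.map (starRingEnd ℂ) = x * conjMat := by
  induction hx using Algebra.adjoin_induction with
  | mem y hy =>
      obtain ⟨k, rfl⟩ := hy
      fin_cases k <;>
        · ext i j
          fin_cases i <;> fin_cases j <;>
            simp [conjMat, weylGamma, mul_apply, Fin.sum_univ_four, Matrix.map_apply, Matrix.vecHead, Matrix.vecTail]
  | algebraMap r =>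
      ext i j
      simp [Matrix.algebraMap_matrix_apply, Matrix.map_apply, mul_apply, Fin.sum_univ_four,
        apply_ite (starRingEnd ℂ)]
      ring
  | add x y hx hy ihx ihy =>
      rw [Matrix.map_add _ (fun a b => map_add (starRingEnd ℂ) a b), mul_add, add_mul, ihx, ihy]
  | mul x y hx hy ihx ihy =>
      rw [Matrix.map_mul, ← mul_assoc, ihx, mul_assoc, ihy, ← mul_assoc]

/-- If `S ∈ D` has determinant one and commutes with all gamma matrices, then `S = ±I`. -/
theorem eq_one_or_neg_one_of_central
    (S : Matrix (Fin 4) (Fin 4) ℂ) (hS : S ∈ diracSubalgebra)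
    (hdet : S.det = 1) (hcomm : ∀ a, S * weylGamma a = weylGamma a * S) :
    S = 1 ∨ S = -1 := by
  have e : ∀ a i j, (S * weylGamma a) i j = (weylGamma a * S) i j := fun a i j => by
    rw [hcomm a]
  have h000 := e 0 0 0; have h003 := e 0 0 3; have h011 := e 0 1 1; have h013 := e 0 1 3
  have h020 := e 0 2 0; have h022 := e 0 2 2; have h023 := e 0 2 3
  have h030 := e 0 3 0; have h032 := e 0 3 2; have h033 := e 0 3 3
  have h100 := e 1 0 0; have h111 := e 1 1 1; have h113 := e 1 1 3; have h130 := e 1 3 0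
  have h211 := e 2 1 1; have h213 := e 2 1 3; have h233 := e 2 3 3
  have h300 := e 3 0 0; have h303 := e 3 0 3; have h311 := e 3 1 1
  simp only [weylGamma, mul_apply, Fin.sum_univ_four] at h000 h003 h011 h013 h020 h022 h023 h030 h032 h033 h100 h111 h113 h130 h211 h213 h233 h300 h303 h311
  simp [Matrix.cons_val] at h000 h003 h011 h013 h020 h022 h023 h030 h032 h033 h100 h111 h113 h130 h211 h213 h233 h300 h303 h311
  -- All off-diagonal entries vanish and the diagonal is constant.
  have z01 : S 0 1 = 0 := by linear_combination h003/2 + h303/2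
  have z02 : S 0 2 = 0 := by linear_combination h000/2 + h300/2
  have h233' : S 3 0 = S 0 3 := mul_left_cancel₀ Complex.I_ne_zero (by linear_combination h233)
  have h213' : S 1 0 = -S 2 3 := mul_left_cancel₀ Complex.I_ne_zero (by linear_combination h213)
  have h211' : S 1 2 = S 2 1 := mul_left_cancel₀ Complex.I_ne_zero (by linear_combination h211)
  have z03 : S 0 3 = 0 := by linear_combination h100/2 - h233'/2
  have z10 : S 1 0 = 0 := by linear_combination h113/2 + h213'/2
  have z12 : S 1 2 = 0 := by linear_combination h111/2 + h211'/2
  have z13 : S 1 3 = 0 := by linear_combination h011/2 - h311/2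
  have z20 : S 2 0 = 0 := by linear_combination h022 + z02
  have z21 : S 2 1 = 0 := by linear_combination h023 + z03
  have z23 : S 2 3 = 0 := by linear_combination -h003 + z01
  have z30 : S 3 0 = 0 := by linear_combination h032 + z12
  have z31 : S 3 1 = 0 := by linear_combination h033 + z13
  have z32 : S 3 2 = 0 := by linear_combination h030 + z10
  have d11 : S 1 1 = S 0 0 := by linear_combination h013 + h130
  have d22 : S 2 2 = S 0 0 := by linear_combination h020
  have d33 : S 3 3 = S 0 0 := by linear_combination h130
  set c : ℂ := S 0 0 with hc
  have key : S = c • (1 : Matrix (Fin 4) (Fin 4) ℂ) := by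
    ext i j
    fin_cases i <;> fin_cases j <;>
      simp [Matrix.one_apply, z01, z02, z03, z10, z12, z13, z20, z21, z23, z30, z31, z32,
        d11, d22, d33, hc]
  -- `c` is real, via the conjugation automorphism.
  have hfix := conjMat_fix S hS
  rw [key] at hfix
  have hentry := congrFun (congrFun hfix 0) 3
  have hM03 : conjMat 0 3 = 1 := by
    simp [conjMat, weylGamma, mul_apply, Fin.sum_univ_four, Matrix.vecHead, Matrix.vecTail]
  have hmap : ((c • (1 : Matrix (Fin 4) (Fin 4) ℂ)).map (starRingEnd ℂ))
      = (starRingEnd ℂ) c • (1 : Matrix (Fin 4) (Fin 4) ℂ) := by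
    ext i j
    simp [Matrix.map_apply, Matrix.one_apply, apply_ite (starRingEnd ℂ)]
  rw [hmap] at hfix
  have hone : (starRingEnd ℂ) c * conjMat 0 3 = c * conjMat 0 3 := by
    have h' := congrFun (congrFun hfix 0) 3
    simpa [Matrix.mul_smul, Matrix.smul_mul, Matrix.smul_apply] using h'
  rw [hM03, mul_one, mul_one] at hone
  have hcre : (c.re : ℂ) = c := Complex.conj_eq_iff_re.mp hone
  rw [key] at hdet
  rw [Matrix.det_smul, Matrix.det_one, mul_one] at hdet
  have hre4 : c.re ^ 4 = 1 := by
    have : ((c.re : ℂ)) ^ 4 = 1 := by rw [hcre]; simpa using hdet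
    exact_mod_cast this
  have h2 : c.re ^ 2 = 1 := by nlinarith [sq_nonneg (c.re ^ 2 - 1), sq_nonneg (c.re ^ 2 + 1)]
  have h3 : (c.re - 1) * (c.re + 1) = 0 := by linear_combination h2
  rcases mul_eq_zero.mp h3 with h | h
  · left
    have : c = 1 := by rw [← hcre]; norm_num [show c.re = 1 by linarith]
    rw [key, this, one_smul]
  · right
    have : c = -1 := by rw [← hcre]; norm_num [show c.re = -1 by linarith]
    rw [key, this]
    simp
end
end

section
/- Let γ_0,γ_1,γ_2,γ_3 be the Weyl gamma matrices and D the real subalgebra of the complex 4×4 matrices they generate. If s ∈ D satisfies trace(s) = 0 and, for each a ∈ {0,1,2,3}, the commutator s γ_a − γ_a s lies in the real linear span of {γ_0, γ_1, γ_2, γ_3}, then s lies in the real linear span of the six products {γ_a γ_b : 0 ≤ a < b ≤ 3}. -/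
open Matrix

noncomputable section

/-! ### Auxiliary: integral (Gaussian-integer) model of the gamma matrices -/

/-- Gaussian-integer model of the Weyl gamma matrices. -/
def gZ : Fin 4 → Matrix (Fin 4) (Fin 4) GaussianInt :=
  ![!![0, 0, 1, 0; 0, 0, 0, 1; 1, 0, 0, 0; 0, 1, 0, 0],
    !![0, 0, 0, -1; 0, 0, -1, 0; 0, 1, 0, 0; 1, 0, 0, 0],
    !![0, 0, 0, ⟨0,1⟩; 0, 0, ⟨0,-1⟩, 0; 0, ⟨0,-1⟩, 0, 0; ⟨0,1⟩, 0, 0, 0],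
    !![0, 0, -1, 0; 0, 0, 0, 1; 1, 0, 0, 0; 0, -1, 0, 0]]

/-- The sixteen monomials in the gamma matrices, Gaussian-integer model. -/
def EZ : Fin 16 → Matrix (Fin 4) (Fin 4) GaussianInt :=
  ![1, gZ 0, gZ 1, gZ 2, gZ 3,
    gZ 0 * gZ 1, gZ 0 * gZ 2, gZ 0 * gZ 3, gZ 1 * gZ 2, gZ 1 * gZ 3, gZ 2 * gZ 3,
    gZ 0 * gZ 1 * gZ 2, gZ 0 * gZ 1 * gZ 3, gZ 0 * gZ 2 * gZ 3, gZ 1 * gZ 2 * gZ 3,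
    gZ 0 * gZ 1 * gZ 2 * gZ 3]

def pIdx : Fin 16 → Fin 4 → Fin 16 :=
  ![![1, 2, 3, 4], ![0, 5, 6, 7], ![5, 0, 8, 9], ![6, 8, 0, 10], ![7, 9, 10, 0],
    ![2, 1, 11, 12], ![3, 11, 1, 13], ![4, 12, 13, 1], ![11, 3, 2, 14], ![12, 4, 14, 2],
    ![13, 14, 4, 3], ![8, 6, 5, 15], ![9, 7, 15, 5], ![10, 15, 7, 6], ![15, 10, 9, 8],
    ![14, 13, 12, 11]]

def pSgn : Fin 16 → Fin 4 → ℤ :=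
  ![![1, 1, 1, 1], ![1, 1, 1, 1], ![-1, -1, 1, 1], ![-1, -1, -1, 1], ![-1, -1, -1, -1],
    ![-1, -1, 1, 1], ![-1, -1, -1, 1], ![-1, -1, -1, -1], ![1, 1, -1, 1], ![1, 1, -1, -1],
    ![1, 1, 1, -1], ![1, 1, -1, 1], ![1, 1, -1, -1], ![1, 1, 1, -1], ![-1, -1, 1, -1],
    ![-1, -1, 1, -1]]

def dTab : Fin 16 → ℤ :=
  ![4, 4, -4, -4, -4, 4, 4, 4, -4, -4, -4, -4, -4, -4, 4, -4]

/-- Auxiliary matrices used to test the commutator condition. -/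
def XZ : Fin 9 → Matrix (Fin 4) (Fin 4) GaussianInt :=
  ![gZ 0 * gZ 1, gZ 1 * gZ 0, gZ 2 * gZ 0, gZ 3 * gZ 0,
    EZ 15, EZ 15, EZ 15, EZ 15, EZ 15 * gZ 0]

def aTab : Fin 9 → Fin 4 := ![1, 0, 0, 0, 0, 1, 2, 3, 0]
def tTab : Fin 9 → Fin 16 := ![1, 2, 3, 4, 14, 13, 12, 11, 15]
def kTab : Fin 9 → ℤ := ![2, -2, -2, -2, 2, 2, -2, 2, -2]

theorem hEg : ∀ (p : Fin 16) (a : Fin 4), EZ p * gZ a = pSgn p a • EZ (pIdx p a) := by decide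

theorem hTrTab : ∀ p q : Fin 16,
    (EZ p * EZ q).trace = if p = q then ((dTab p : ℤ) : GaussianInt) else 0 := by decide

theorem hCZ : ∀ k : Fin 9,
    gZ (aTab k) * XZ k - XZ k * gZ (aTab k) = kTab k • EZ (tTab k) := by decide

theorem hTvan : ∀ (k : Fin 9) (c : Fin 4), (gZ c * XZ k).trace = 0 := by decide

theorem eZ0 : EZ 0 = 1 := by decide
theorem eZ1 : EZ 1 = gZ 0 := by decide
theorem eZ2 : EZ 2 = gZ 1 := by decide
theorem eZ3 : EZ 3 = gZ 2 := by decide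
theorem eZ4 : EZ 4 = gZ 3 := by decide
theorem eZ5 : EZ 5 = gZ 0 * gZ 1 := by decide
theorem eZ6 : EZ 6 = gZ 0 * gZ 2 := by decide
theorem eZ7 : EZ 7 = gZ 0 * gZ 3 := by decide
theorem eZ8 : EZ 8 = gZ 1 * gZ 2 := by decide
theorem eZ9 : EZ 9 = gZ 1 * gZ 3 := by decide
theorem eZ10 : EZ 10 = gZ 2 * gZ 3 := by decide
theorem eZ11 : EZ 11 = gZ 0 * gZ 1 * gZ 2 := by decide
theorem eZ12 : EZ 12 = gZ 0 * gZ 1 * gZ 3 := by decide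
theorem eZ13 : EZ 13 = gZ 0 * gZ 2 * gZ 3 := by decide
theorem eZ14 : EZ 14 = gZ 1 * gZ 2 * gZ 3 := by decide
theorem eZ15 : EZ 15 = gZ 0 * gZ 1 * gZ 2 * gZ 3 := by decide

/-- The matrix entry-map given by the Gaussian integer embedding. -/
def Φ : Matrix (Fin 4) (Fin 4) GaussianInt →+* Matrix (Fin 4) (Fin 4) ℂ :=
  (GaussianInt.toComplex).mapMatrix

theorem hmapg : ∀ a, Φ (gZ a) = weylGamma a := by
  intro a
  fin_cases a <;>
    · ext i j
      fin_cases i <;> fin_cases j <;>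
        simp [Φ, gZ, weylGamma, Matrix.map_apply, GaussianInt.toComplex_def',
          Matrix.vecHead, Matrix.vecTail]

/-- The sixteen monomials, complex model. -/
def EC : Fin 16 → Matrix (Fin 4) (Fin 4) ℂ := fun p => Φ (EZ p)

/-- The auxiliary test matrices, complex model. -/
def XC : Fin 9 → Matrix (Fin 4) (Fin 4) ℂ := fun k => Φ (XZ k)

theorem hEC0 : EC 0 = 1 := by rw [EC, eZ0, _root_.map_one]
theorem hEC1 : EC 1 = weylGamma 0 := by rw [EC, eZ1, hmapg]
theorem hEC2 : EC 2 = weylGamma 1 := by rw [EC, eZ2, hmapg]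
theorem hEC3 : EC 3 = weylGamma 2 := by rw [EC, eZ3, hmapg]
theorem hEC4 : EC 4 = weylGamma 3 := by rw [EC, eZ4, hmapg]
theorem hEC5 : EC 5 = weylGamma 0 * weylGamma 1 := by
  rw [EC, eZ5, _root_.map_mul, hmapg, hmapg]
theorem hEC6 : EC 6 = weylGamma 0 * weylGamma 2 := by
  rw [EC, eZ6, _root_.map_mul, hmapg, hmapg]
theorem hEC7 : EC 7 = weylGamma 0 * weylGamma 3 := by
  rw [EC, eZ7, _root_.map_mul, hmapg, hmapg]
theorem hEC8 : EC 8 = weylGamma 1 * weylGamma 2 := by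
  rw [EC, eZ8, _root_.map_mul, hmapg, hmapg]
theorem hEC9 : EC 9 = weylGamma 1 * weylGamma 3 := by
  rw [EC, eZ9, _root_.map_mul, hmapg, hmapg]
theorem hEC10 : EC 10 = weylGamma 2 * weylGamma 3 := by
  rw [EC, eZ10, _root_.map_mul, hmapg, hmapg]
theorem hEC11 : EC 11 = weylGamma 0 * weylGamma 1 * weylGamma 2 := by
  rw [EC, eZ11, _root_.map_mul, _root_.map_mul, hmapg, hmapg, hmapg]
theorem hEC12 : EC 12 = weylGamma 0 * weylGamma 1 * weylGamma 3 := by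
  rw [EC, eZ12, _root_.map_mul, _root_.map_mul, hmapg, hmapg, hmapg]
theorem hEC13 : EC 13 = weylGamma 0 * weylGamma 2 * weylGamma 3 := by
  rw [EC, eZ13, _root_.map_mul, _root_.map_mul, hmapg, hmapg, hmapg]
theorem hEC14 : EC 14 = weylGamma 1 * weylGamma 2 * weylGamma 3 := by
  rw [EC, eZ14, _root_.map_mul, _root_.map_mul, hmapg, hmapg, hmapg]
theorem hEC15 : EC 15 = weylGamma 0 * weylGamma 1 * weylGamma 2 * weylGamma 3 := by
  rw [EC, eZ15, _root_.map_mul, _root_.map_mul, _root_.map_mul, hmapg, hmapg, hmapg, hmapg]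

theorem trace_Φ (M : Matrix (Fin 4) (Fin 4) GaussianInt) :
    (Φ M).trace = GaussianInt.toComplex M.trace := by
  simp [Φ, Matrix.trace, Matrix.map_apply, map_sum]

/-- Complex version of the multiplication table. -/
theorem hEgC : ∀ (p : Fin 16) (a : Fin 4),
    EC p * weylGamma a = (pSgn p a : ℝ) • EC (pIdx p a) := by
  intro p a
  have h := congrArg Φ (hEg p a)
  rw [_root_.map_mul, hmapg, map_zsmul] at h
  rw [Int.cast_smul_eq_zsmul]
  exact h

theorem hTrTabC : ∀ p q : Fin 16,
    (EC p * EC q).trace = if p = q then ((dTab p : ℤ) : ℂ) else 0 := by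
  intro p q
  have h := congrArg GaussianInt.toComplex (hTrTab p q)
  rw [← trace_Φ, _root_.map_mul] at h
  rw [show EC p = Φ (EZ p) from rfl, show EC q = Φ (EZ q) from rfl, h]
  split <;> simp

theorem hCC : ∀ k : Fin 9,
    weylGamma (aTab k) * XC k - XC k * weylGamma (aTab k) = (kTab k : ℝ) • EC (tTab k) := by
  intro k
  have h := congrArg Φ (hCZ k)
  rw [_root_.map_sub, _root_.map_mul, _root_.map_mul, hmapg, map_zsmul] at h
  rw [Int.cast_smul_eq_zsmul]
  exact h

theorem hTvanC : ∀ (k : Fin 9) (c : Fin 4), (weylGamma c * XC k).trace = 0 := by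
  intro k c
  have h := congrArg GaussianInt.toComplex (hTvan k c)
  rw [← trace_Φ, _root_.map_mul, hmapg] at h
  simpa [XC] using h

/-- If `s ∈ D` is traceless and its commutator with every gamma matrix lies in the real
span of the gamma matrices, then `s` lies in the real span of the products
`γ_a γ_b` with `a < b` (the spin Lie algebra). -/
theorem mem_span_gammaProducts_of_traceless
    (s : Matrix (Fin 4) (Fin 4) ℂ) (hs : s ∈ diracSubalgebra)
    (htr : s.trace = 0)
    (hcomm : ∀ a, s * weylGamma a - weylGamma a * s ∈
      Submodule.span ℝ (Set.range weylGamma)) :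
    s ∈ Submodule.span ℝ
      {x : Matrix (Fin 4) (Fin 4) ℂ |
        ∃ a b : Fin 4, a < b ∧ x = weylGamma a * weylGamma b} := by
  classical
  set T : Submodule ℝ (Matrix (Fin 4) (Fin 4) ℂ) :=
    Submodule.span ℝ
      {x : Matrix (Fin 4) (Fin 4) ℂ |
        ∃ a b : Fin 4, a < b ∧ x = weylGamma a * weylGamma b} with hT
  show s ∈ T
  set S16 : Submodule ℝ (Matrix (Fin 4) (Fin 4) ℂ) :=
    Submodule.span ℝ (Set.range EC) with hS16
  -- Step 1: S16 is closed under right multiplication by the gamma matrices.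
  have stab : ∀ (a : Fin 4) (x), x ∈ S16 → x * weylGamma a ∈ S16 := by
    intro a x hx
    induction hx using Submodule.span_induction with
    | mem y hy =>
        obtain ⟨p, rfl⟩ := hy
        rw [hEgC p a]
        exact Submodule.smul_mem _ _ (Submodule.subset_span ⟨pIdx p a, rfl⟩)
    | zero => simpa using Submodule.zero_mem S16
    | add y z _ _ hy hz => rw [add_mul]; exact Submodule.add_mem _ hy hz
    | smul r y _ hy => rw [smul_mul_assoc]; exact Submodule.smul_mem _ _ hy
  have h1mem : (1 : Matrix (Fin 4) (Fin 4) ℂ) ∈ S16 :=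
    Submodule.subset_span ⟨0, hEC0⟩
  -- Step 2: S16 is closed under multiplication.
  have hmul : ∀ x y : Matrix (Fin 4) (Fin 4) ℂ, x ∈ S16 → y ∈ S16 → x * y ∈ S16 := by
    intro x y hx hy
    induction hy using Submodule.span_induction with
    | mem z hz =>
        obtain ⟨p, rfl⟩ := hz
        fin_cases p
        · show x * EC 0 ∈ S16
          rw [show EC 0 = 1 from hEC0, mul_one]; exact hx
        · show x * EC 1 ∈ S16
          rw [show EC 1 = weylGamma 0 from hEC1]; exact stab 0 x hx
        · show x * EC 2 ∈ S16
          rw [show EC 2 = weylGamma 1 from hEC2]; exact stab 1 x hx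
        · show x * EC 3 ∈ S16
          rw [show EC 3 = weylGamma 2 from hEC3]; exact stab 2 x hx
        · show x * EC 4 ∈ S16
          rw [show EC 4 = weylGamma 3 from hEC4]; exact stab 3 x hx
        · show x * EC 5 ∈ S16
          rw [show EC 5 = weylGamma 0 * weylGamma 1 from hEC5, ← mul_assoc]
          exact stab 1 _ (stab 0 _ hx)
        · show x * EC 6 ∈ S16
          rw [show EC 6 = weylGamma 0 * weylGamma 2 from hEC6, ← mul_assoc]
          exact stab 2 _ (stab 0 _ hx)
        · show x * EC 7 ∈ S16
          rw [show EC 7 = weylGamma 0 * weylGamma 3 from hEC7, ← mul_assoc]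
          exact stab 3 _ (stab 0 _ hx)
        · show x * EC 8 ∈ S16
          rw [show EC 8 = weylGamma 1 * weylGamma 2 from hEC8, ← mul_assoc]
          exact stab 2 _ (stab 1 _ hx)
        · show x * EC 9 ∈ S16
          rw [show EC 9 = weylGamma 1 * weylGamma 3 from hEC9, ← mul_assoc]
          exact stab 3 _ (stab 1 _ hx)
        · show x * EC 10 ∈ S16
          rw [show EC 10 = weylGamma 2 * weylGamma 3 from hEC10, ← mul_assoc]
          exact stab 3 _ (stab 2 _ hx)
        · show x * EC 11 ∈ S16
          rw [show EC 11 = weylGamma 0 * weylGamma 1 * weylGamma 2 from hEC11,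
            ← mul_assoc, ← mul_assoc]
          exact stab 2 _ (stab 1 _ (stab 0 _ hx))
        · show x * EC 12 ∈ S16
          rw [show EC 12 = weylGamma 0 * weylGamma 1 * weylGamma 3 from hEC12,
            ← mul_assoc, ← mul_assoc]
          exact stab 3 _ (stab 1 _ (stab 0 _ hx))
        · show x * EC 13 ∈ S16
          rw [show EC 13 = weylGamma 0 * weylGamma 2 * weylGamma 3 from hEC13,
            ← mul_assoc, ← mul_assoc]
          exact stab 3 _ (stab 2 _ (stab 0 _ hx))
        · show x * EC 14 ∈ S16
          rw [show EC 14 = weylGamma 1 * weylGamma 2 * weylGamma 3 from hEC14,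
            ← mul_assoc, ← mul_assoc]
          exact stab 3 _ (stab 2 _ (stab 1 _ hx))
        · show x * EC 15 ∈ S16
          rw [show EC 15 = weylGamma 0 * weylGamma 1 * weylGamma 2 * weylGamma 3 from hEC15,
            ← mul_assoc, ← mul_assoc, ← mul_assoc]
          exact stab 3 _ (stab 2 _ (stab 1 _ (stab 0 _ hx)))
    | zero => simpa using Submodule.zero_mem S16
    | add y z _ _ hy hz => rw [mul_add]; exact Submodule.add_mem _ hy hz
    | smul r y _ hy => rw [mul_smul_comm]; exact Submodule.smul_mem _ _ hy
  -- Step 3: s ∈ S16.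
  have hs16 : s ∈ S16 := by
    have hle : diracSubalgebra ≤ S16.toSubalgebra h1mem hmul := by
      apply Algebra.adjoin_le
      rintro _ ⟨a, rfl⟩
      show weylGamma a ∈ S16
      fin_cases a
      · exact Submodule.subset_span ⟨1, hEC1⟩
      · exact Submodule.subset_span ⟨2, hEC2⟩
      · exact Submodule.subset_span ⟨3, hEC3⟩
      · exact Submodule.subset_span ⟨4, hEC4⟩
    exact hle hs
  obtain ⟨c, hc⟩ := (Submodule.mem_span_range_iff_exists_fun ℝ).mp hs16
  -- Step 4: trace pairing computes coefficients.
  have key : ∀ p : Fin 16, (s * EC p).trace = (c p : ℂ) * ((dTab p : ℤ) : ℂ) := by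
    intro p
    rw [← hc, Finset.sum_mul, trace_sum]
    have hterm : ∀ j ∈ Finset.univ, ((c j • EC j) * EC p).trace
        = if j = p then c j • ((dTab j : ℤ) : ℂ) else 0 := by
      intro j _
      rw [smul_mul_assoc, trace_smul, hTrTabC j p, smul_ite, smul_zero]
    rw [Finset.sum_congr rfl hterm,
      Finset.sum_ite_eq' Finset.univ p (fun j => c j • ((dTab j : ℤ) : ℂ))]
    simp [Complex.real_smul]
  -- Step 5: the ten non-bivector coefficients vanish.
  have hv : ∀ k : Fin 9, c (tTab k) = 0 := by
    intro k
    have hspan0 : ∀ y ∈ Submodule.span ℝ (Set.range weylGamma), (y * XC k).trace = 0 := by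
      intro y hy
      induction hy using Submodule.span_induction with
      | mem y hy => obtain ⟨cc, rfl⟩ := hy; exact hTvanC k cc
      | zero => simp
      | add y z _ _ hy hz => rw [add_mul, trace_add, hy, hz, add_zero]
      | smul r y _ hy => rw [smul_mul_assoc, trace_smul, hy, smul_zero]
    have hspan : ((s * weylGamma (aTab k) - weylGamma (aTab k) * s) * XC k).trace = 0 :=
      hspan0 _ (hcomm (aTab k))
    have h2 : (s * ((kTab k : ℝ) • EC (tTab k))).trace = 0 := by
      rw [← hCC k, mul_sub, trace_sub]
      have hB : (s * (XC k * weylGamma (aTab k))).trace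
          = (weylGamma (aTab k) * s * XC k).trace := by
        rw [← mul_assoc, trace_mul_comm, ← mul_assoc]
      rw [sub_mul, trace_sub, sub_eq_zero] at hspan
      rw [hB, ← mul_assoc, hspan, sub_self]
    rw [mul_smul_comm, trace_smul, key, Complex.real_smul] at h2
    have hk : ((kTab k : ℝ) : ℂ) ≠ 0 := by
      have h' : ∀ k', kTab k' ≠ 0 := by decide
      exact_mod_cast h' k
    have hd : ((dTab (tTab k) : ℤ) : ℂ) ≠ 0 :=
      Int.cast_ne_zero.mpr ((fun h' => h' k) (by decide : ∀ k', dTab (tTab k') ≠ 0))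
    rcases mul_eq_zero.mp h2 with h | h
    · exact absurd h hk
    · rcases mul_eq_zero.mp h with h' | h'
      · exact_mod_cast h'
      · exact absurd h' hd
  have hv0 : c 0 = 0 := by
    have h0 : (s * EC 0).trace = 0 := by
      rw [hEC0, mul_one, htr]
    rw [key 0] at h0
    have hd : ((dTab 0 : ℤ) : ℂ) ≠ 0 := Int.cast_ne_zero.mpr (by decide)
    rcases mul_eq_zero.mp h0 with h' | h'
    · exact_mod_cast h'
    · exact absurd h' hd
  -- Step 6: conclude.
  rw [← hc]
  apply Submodule.sum_mem
  intro j _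
  fin_cases j
  · show c 0 • EC 0 ∈ T
    rw [show c 0 = 0 from hv0, zero_smul]; exact Submodule.zero_mem _
  · show c 1 • EC 1 ∈ T
    rw [show c 1 = 0 from hv 0, zero_smul]; exact Submodule.zero_mem _
  · show c 2 • EC 2 ∈ T
    rw [show c 2 = 0 from hv 1, zero_smul]; exact Submodule.zero_mem _
  · show c 3 • EC 3 ∈ T
    rw [show c 3 = 0 from hv 2, zero_smul]; exact Submodule.zero_mem _
  · show c 4 • EC 4 ∈ T
    rw [show c 4 = 0 from hv 3, zero_smul]; exact Submodule.zero_mem _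
  · show c 5 • EC 5 ∈ T
    exact Submodule.smul_mem _ _ (Submodule.subset_span ⟨0, 1, by decide, hEC5⟩)
  · show c 6 • EC 6 ∈ T
    exact Submodule.smul_mem _ _ (Submodule.subset_span ⟨0, 2, by decide, hEC6⟩)
  · show c 7 • EC 7 ∈ T
    exact Submodule.smul_mem _ _ (Submodule.subset_span ⟨0, 3, by decide, hEC7⟩)
  · show c 8 • EC 8 ∈ T
    exact Submodule.smul_mem _ _ (Submodule.subset_span ⟨1, 2, by decide, hEC8⟩)
  · show c 9 • EC 9 ∈ T
    exact Submodule.smul_mem _ _ (Submodule.subset_span ⟨1, 3, by decide, hEC9⟩)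
  · show c 10 • EC 10 ∈ T
    exact Submodule.smul_mem _ _ (Submodule.subset_span ⟨2, 3, by decide, hEC10⟩)
  · show c 11 • EC 11 ∈ T
    rw [show c 11 = 0 from hv 7, zero_smul]; exact Submodule.zero_mem _
  · show c 12 • EC 12 ∈ T
    rw [show c 12 = 0 from hv 6, zero_smul]; exact Submodule.zero_mem _
  · show c 13 • EC 13 ∈ T
    rw [show c 13 = 0 from hv 5, zero_smul]; exact Submodule.zero_mem _
  · show c 14 • EC 14 ∈ T
    rw [show c 14 = 0 from hv 4, zero_smul]; exact Submodule.zero_mem _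
  · show c 15 • EC 15 ∈ T
    rw [show c 15 = 0 from hv 8, zero_smul]; exact Submodule.zero_mem _
end
end

section
/- Let H be a complex Hilbert space and T a densely defined self-adjoint operator on H (T equals its Hilbert-space adjoint T*) which is unbounded, i.e. there is no constant c ≥ 0 with ‖Tψ‖ ≤ c‖ψ‖ for all ψ in the domain of T. Then the domain of T is an F_σ subset of H (a countable union of closed sets) which is meagre; equivalently, the complement of the domain of T contains a dense G_δ subset of H. -/
open scoped LinearPMap ComplexConjugate

noncomputable section

local notation "⟪" x ", " y "⟫" => @inner ℂ _ _ x y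

/-- A nowhere dense set is meagre. -/
lemma aux_isNowhereDense_isMeagre {X : Type*} [TopologicalSpace X] {s : Set X}
    (h : IsNowhereDense s) : IsMeagre s := by
  rw [isMeagre_iff_countable_union_isNowhereDense]
  exact ⟨{s}, by simpa using h, Set.countable_singleton s, by simp⟩

/-- The domain of an unbounded, densely defined self-adjoint operator on a complex
Hilbert space is a meagre `F_σ` subset of the space. -/
theorem domain_of_unbounded_selfAdjoint_isMeagre_Fsigma
    {H : Type*} [NormedAddCommGroup H] [InnerProductSpace ℂ H] [CompleteSpace H]
    (T : H →ₗ.[ℂ] H) (hdense : Dense (T.domain : Set H))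
    (hsa : T.adjoint = T)
    (hunbounded : ¬∃ c : ℝ, 0 ≤ c ∧ ∀ ψ : T.domain, ‖T ψ‖ ≤ c * ‖(ψ : H)‖) :
    (∃ f : ℕ → Set H, (∀ n, IsClosed (f n)) ∧ (T.domain : Set H) = ⋃ n, f n) ∧
    IsMeagre (T.domain : Set H) := by
  classical
  -- `T` is symmetric
  have hsym : T.IsFormalAdjoint T := by
    have := LinearPMap.adjoint_isFormalAdjoint hdense (T := T)
    rwa [hsa] at this
  set f : ℕ → Set H := fun n => {x : H | ∀ y : T.domain, ‖⟪x, T y⟫‖ ≤ n * ‖(y : H)‖} with hfdef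
  -- each `f n` is closed
  have hclosed : ∀ n, IsClosed (f n) := by
    intro n
    have : f n = ⋂ y : T.domain, {x : H | ‖⟪x, T y⟫‖ ≤ n * ‖(y : H)‖} := by
      ext x; simp [hfdef, Set.mem_iInter]
    rw [this]
    exact isClosed_iInter fun y =>
      isClosed_le ((continuous_id.inner continuous_const).norm) continuous_const
  -- the domain is the union of the `f n`
  have hdom : (T.domain : Set H) = ⋃ n, f n := by
    ext x
    constructor
    · intro hx
      refine Set.mem_iUnion.2 ⟨⌈‖T ⟨x, hx⟩‖⌉₊, fun y => ?_⟩
      have h1 : ⟪x, T y⟫ = ⟪T ⟨x, hx⟩, (y : H)⟫ := (hsym ⟨x, hx⟩ y).symm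
      calc ‖⟪x, T y⟫‖ = ‖⟪T ⟨x, hx⟩, (y : H)⟫‖ := by rw [h1]
        _ ≤ ‖T ⟨x, hx⟩‖ * ‖(y : H)‖ := norm_inner_le_norm _ _
        _ ≤ (⌈‖T ⟨x, hx⟩‖⌉₊ : ℝ) * ‖(y : H)‖ := by gcongr; exact Nat.le_ceil _
    · intro hx
      obtain ⟨n, hn⟩ := Set.mem_iUnion.1 hx
      have hmem : x ∈ T.adjoint.domain := by
        rw [LinearPMap.mem_adjoint_domain_iff]
        exact AddMonoidHomClass.continuous_of_bound ((innerₛₗ ℂ x).comp T.toFun) (n : ℝ)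
          fun y => by simpa using hn y
      rwa [hsa] at hmem
  -- each `f n` has empty interior
  have hint : ∀ n, interior (f n) = ∅ := by
    intro n
    by_contra h
    obtain ⟨x0, hx0⟩ := Set.nonempty_iff_ne_empty.2 h
    obtain ⟨ε, hε, hball⟩ := Metric.isOpen_iff.1 isOpen_interior x0 hx0
    have hball' : Metric.ball x0 ε ⊆ f n := hball.trans interior_subset
    have hx0' : x0 ∈ f n := interior_subset hx0
    apply hunbounded
    refine ⟨4 * n / ε, by positivity, fun ψ => ?_⟩
    rcases eq_or_ne (T ψ) 0 with h0 | h0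
    · rw [h0, norm_zero]; positivity
    · have hTψ : (0 : ℝ) < ‖T ψ‖ := norm_pos_iff.2 h0
      set c : ℝ := ε / (2 * ‖T ψ‖) with hc
      have hcpos : 0 < c := by positivity
      set u : H := (c : ℂ) • T ψ with hu
      have hun : ‖u‖ = ε / 2 := by
        rw [hu, norm_smul, Complex.norm_real, Real.norm_of_nonneg hcpos.le, hc]
        field_simp
      have h1 : x0 + u ∈ f n := by
        apply hball'
        rw [Metric.mem_ball, dist_eq_norm, add_sub_cancel_left, hun]
        linarith
      have key : ‖⟪u, T ψ⟫‖ ≤ 2 * n * ‖(ψ : H)‖ := by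
        have e1 : ⟪u, T ψ⟫ = ⟪x0 + u, T ψ⟫ - ⟪x0, T ψ⟫ := by
          rw [inner_add_left]; ring
        calc ‖⟪u, T ψ⟫‖ = ‖⟪x0 + u, T ψ⟫ - ⟪x0, T ψ⟫‖ := by rw [e1]
          _ ≤ ‖⟪x0 + u, T ψ⟫‖ + ‖⟪x0, T ψ⟫‖ := norm_sub_le _ _
          _ ≤ n * ‖(ψ : H)‖ + n * ‖(ψ : H)‖ := add_le_add (h1 ψ) (hx0' ψ)
          _ = 2 * n * ‖(ψ : H)‖ := by ring
      have hval : ‖⟪u, T ψ⟫‖ = c * ‖T ψ‖ ^ 2 := by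
        rw [hu, inner_smul_left, Complex.conj_ofReal, norm_mul, Complex.norm_real,
          Real.norm_of_nonneg hcpos.le, inner_self_eq_norm_sq_to_K,
          norm_pow, RCLike.norm_ofReal, abs_of_nonneg (norm_nonneg _)]
      have hval' : c * ‖T ψ‖ ^ 2 = (ε / 2) * ‖T ψ‖ := by
        rw [hc]; field_simp
      have hle : (ε / 2) * ‖T ψ‖ ≤ 2 * n * ‖(ψ : H)‖ := by
        rw [← hval', ← hval]; exact key
      rw [div_mul_eq_mul_div, le_div_iff₀ hε]
      nlinarith [hle, norm_nonneg (ψ : H), hTψ]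
  -- conclusion
  refine ⟨⟨f, hclosed, hdom⟩, ?_⟩
  rw [hdom]
  exact isMeagre_iUnion fun n =>
    aux_isNowhereDense_isMeagre (((hclosed n).isNowhereDense_iff).2 (hint n))
end
end

section
/- Let B be a complex Banach space with continuous dual B′, let O ⊆ ℝⁿ be open, let K ⊆ O be compact and convex, and let f : O → B be a function such that for every φ ∈ B′ the scalar function φ∘f is infinitely differentiable on O. Then there exists a constant C ≥ 0 such that ‖f(x) − f(y)‖ ≤ C‖x − y‖ for all x, y ∈ K. -/
noncomputable section

/-- If `f : O → B` is a Banach-space-valued function on an open set `O ⊆ ℝⁿ` which is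
weakly smooth (i.e. `φ ∘ f` is infinitely differentiable on `O` for every continuous
linear functional `φ`), then `f` is Lipschitz on every compact convex `K ⊆ O`. -/
theorem lipschitz_on_compact_convex_of_weakly_smooth
    {B : Type*} [NormedAddCommGroup B] [NormedSpace ℂ B] [CompleteSpace B]
    {n : ℕ} {O K : Set (EuclideanSpace ℝ (Fin n))}
    (hO : IsOpen O) (hK : IsCompact K) (hKconv : Convex ℝ K) (hKO : K ⊆ O)
    (f : EuclideanSpace ℝ (Fin n) → B)
    (hf : ∀ φ : B →L[ℂ] ℂ, ContDiffOn ℝ (⊤ : ℕ∞) (fun x => φ (f x)) O) :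
    ∃ C : ℝ, 0 ≤ C ∧ ∀ x ∈ K, ∀ y ∈ K, ‖f x - f y‖ ≤ C * ‖x - y‖ := by
  -- For each φ, φ ∘ f is Lipschitz on K with some constant.
  have key : ∀ φ : B →L[ℂ] ℂ, ∃ L : ℝ, ∀ x ∈ K, ∀ y ∈ K,
      ‖φ (f x) - φ (f y)‖ ≤ L * ‖x - y‖ := by
    intro φ
    have h1 : ContDiffOn ℝ 1 (fun x => φ (f x)) O := (hf φ).of_le (by exact_mod_cast le_top)
    have hdiff : DifferentiableOn ℝ (fun x => φ (f x)) O :=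
      h1.differentiableOn one_ne_zero
    have hcont : ContinuousOn (fun x => fderiv ℝ (fun x => φ (f x)) x) K :=
      ((h1.continuousOn_fderiv_of_isOpen hO le_rfl).mono hKO)
    obtain ⟨L, hL⟩ := hK.exists_bound_of_continuousOn hcont
    refine ⟨L, ?_⟩
    intro x hx y hy
    exact hKconv.norm_image_sub_le_of_norm_fderiv_le
      (fun z hz => (hdiff.differentiableAt (hO.mem_nhds (hKO hz))))
      (fun z hz => hL z hz) hy hx
  -- The set of difference quotients, viewed in the double dual, is pointwise bounded.
  set S : Set B := {v | ∃ x ∈ K, ∃ y ∈ K, x ≠ y ∧ v = ‖x - y‖⁻¹ • (f x - f y)} with hS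
  have hbound : ∃ C', ∀ i : S,
      ‖(NormedSpace.inclusionInDoubleDual ℂ B) (i : B)‖ ≤ C' := by
    apply banach_steinhaus
    intro φ
    obtain ⟨L, hL⟩ := key φ
    refine ⟨max L 0, ?_⟩
    rintro ⟨v, x, hx, y, hy, hxy, rfl⟩
    have hxy' : (0:ℝ) < ‖x - y‖ := by
      rw [norm_pos_iff]; exact sub_ne_zero_of_ne hxy
    rw [NormedSpace.dual_def, φ.map_smul_of_tower, map_sub, norm_smul]
    have : ‖φ (f x) - φ (f y)‖ ≤ max L 0 * ‖x - y‖ := by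
      calc ‖φ (f x) - φ (f y)‖ ≤ L * ‖x - y‖ := hL x hx y hy
        _ ≤ max L 0 * ‖x - y‖ := by
            gcongr; exact le_max_left _ _
    calc ‖(‖x - y‖⁻¹ : ℝ)‖ * ‖φ (f x) - φ (f y)‖
        ≤ ‖x - y‖⁻¹ * (max L 0 * ‖x - y‖) := by
          rw [Real.norm_eq_abs, abs_of_nonneg (inv_nonneg.2 hxy'.le)]
          exact mul_le_mul_of_nonneg_left this (inv_nonneg.2 hxy'.le)
      _ = max L 0 := by field_simp
  obtain ⟨C', hC'⟩ := hbound
  refine ⟨max C' 0, le_max_right _ _, fun x hx y hy => ?_⟩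
  rcases eq_or_ne x y with rfl | hxy
  · simp
  · have hxy' : (0:ℝ) < ‖x - y‖ := by
      rw [norm_pos_iff]; exact sub_ne_zero_of_ne hxy
    have hv : (‖x - y‖⁻¹ • (f x - f y)) ∈ S := ⟨x, hx, y, hy, hxy, rfl⟩
    have := hC' ⟨_, hv⟩
    have heq : ‖(NormedSpace.inclusionInDoubleDual ℂ B) (‖x - y‖⁻¹ • (f x - f y))‖
        = ‖(‖x - y‖⁻¹ • (f x - f y) : B)‖ :=
      (NormedSpace.inclusionInDoubleDualLi (𝕜 := ℂ) (E := B)).norm_map _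
    rw [heq] at this
    have hnorm : ‖x - y‖⁻¹ * ‖f x - f y‖ ≤ C' := by
      rwa [norm_smul, Real.norm_eq_abs, abs_of_nonneg (inv_nonneg.2 hxy'.le)] at this
    have : ‖f x - f y‖ ≤ C' * ‖x - y‖ := by
      rw [← div_le_iff₀ hxy'] at *
      calc ‖f x - f y‖ / ‖x - y‖ = ‖x - y‖⁻¹ * ‖f x - f y‖ := by ring
        _ ≤ C' := hnorm
    calc ‖f x - f y‖ ≤ C' * ‖x - y‖ := this
      _ ≤ max C' 0 * ‖x - y‖ := by gcongr; exact le_max_left _ _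
end
end
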